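/- arXiv:1510.00875 — 6 statements merged into one kernel-verified Lean document; each statement's English description precedes it below -/
import Mathlib

section
/- Let β, k_d, k be real constants with k² + k_d² ≠ 0, let β̃ = βk/(k² + k_d²), and define S(x,y,t) = √((kx + β̃t)² + k²y²). Then at every point where S ≠ 0, S satisfies the Rossby wave eikonal equation S_t·(S_x² + S_y² + k_d²) − β·S_x = 0. -/
noncomputable def rossbyS (β kd k : ℝ) (x y t : ℝ) : ℝ :=
  Real.sqrt ((k * x + (β * k / (k ^ 2 + kd ^ 2)) * t) ^ 2 + k ^ 2 * y ^ 2)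

/-- The phase `S(x,y,t) = √((kx + β̃t)² + k²y²)`, with `β̃ = βk/(k²+k_d²)`,
satisfies the Rossby wave eikonal equation wherever `S ≠ 0`. -/
theorem stmt0 (β kd k : ℝ) (hk : k ^ 2 + kd ^ 2 ≠ 0) (x y t : ℝ)
    (hS : rossbyS β kd k x y t ≠ 0) :
    (deriv (fun t' => rossbyS β kd k x y t') t) *
      ((deriv (fun x' => rossbyS β kd k x' y t) x) ^ 2 +
       (deriv (fun y' => rossbyS β kd k x y' t) y) ^ 2 + kd ^ 2)
      - β * deriv (fun x' => rossbyS β kd k x' y t) x = 0 := by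
  set c := β * k / (k ^ 2 + kd ^ 2) with hc
  set A := k * x + c * t with hA
  set u := A ^ 2 + k ^ 2 * y ^ 2 with hu
  have hu0 : u ≠ 0 := by
    intro h
    apply hS
    simp [rossbyS, ← hc, ← hA, ← hu, h]
  have hS0 : Real.sqrt u > 0 := by
    have hupos : 0 < u := lt_of_le_of_ne (by positivity) (Ne.symm hu0)
    exact Real.sqrt_pos.mpr hupos
  have hsq : Real.sqrt u ≠ 0 := ne_of_gt hS0
  -- derivative in t
  have ht : HasDerivAt (fun t' => rossbyS β kd k x y t')
      (1 / (2 * Real.sqrt u) * (2 * A * c)) t := by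
    have hg : HasDerivAt (fun t' => (k * x + c * t') ^ 2 + k ^ 2 * y ^ 2)
        (2 * A * c) t := by
      have h1 : HasDerivAt (fun t' => k * x + c * t') c t := by
        simpa using ((hasDerivAt_id t).const_mul c).const_add (k * x)
      have := (h1.pow 2).add_const (k ^ 2 * y ^ 2)
      simpa [hA, mul_comm, mul_assoc, mul_left_comm] using this
    exact (Real.hasDerivAt_sqrt hu0).comp t hg
  have hx : HasDerivAt (fun x' => rossbyS β kd k x' y t)
      (1 / (2 * Real.sqrt u) * (2 * A * k)) x := by
    have hg : HasDerivAt (fun x' => (k * x' + c * t) ^ 2 + k ^ 2 * y ^ 2)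
        (2 * A * k) x := by
      have h1 : HasDerivAt (fun x' => k * x' + c * t) k x := by
        simpa using ((hasDerivAt_id x).const_mul k).add_const (c * t)
      have := (h1.pow 2).add_const (k ^ 2 * y ^ 2)
      simpa [hA, mul_comm, mul_assoc, mul_left_comm] using this
    exact (Real.hasDerivAt_sqrt hu0).comp x hg
  have hy : HasDerivAt (fun y' => rossbyS β kd k x y' t)
      (1 / (2 * Real.sqrt u) * (2 * (k ^ 2 * y))) y := by
    have hg : HasDerivAt (fun y' => A ^ 2 + k ^ 2 * y' ^ 2)
        (2 * (k ^ 2 * y)) y := by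
      have h1 : HasDerivAt (fun y' : ℝ => y' ^ 2) (2 * y) y := by
        simpa using hasDerivAt_pow 2 y
      have := (h1.const_mul (k ^ 2)).const_add (A ^ 2)
      simpa [mul_comm, mul_assoc, mul_left_comm] using this
    exact (Real.hasDerivAt_sqrt hu0).comp y hg
  rw [ht.deriv, hx.deriv, hy.deriv]
  have hsqu : Real.sqrt u ^ 2 = u := Real.sq_sqrt (lt_of_le_of_ne (by positivity) (Ne.symm hu0)).le
  have key : c * (k ^ 2 + kd ^ 2) = β * k := by rw [hc]; field_simp
  clear_value c A u
  have h2 : (1 / (2 * Real.sqrt u) * (2 * A * k)) ^ 2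
      + (1 / (2 * Real.sqrt u) * (2 * (k ^ 2 * y))) ^ 2 + kd ^ 2 = k ^ 2 + kd ^ 2 := by
    field_simp
    linear_combination (-k ^ 2) * hsqu - k ^ 2 * hu
  rw [h2]
  field_simp
  linear_combination A * key
end

section
/- Let β, k_d, k be real with k² + k_d² ≠ 0, β̃ = βk/(k² + k_d²), A(x,y,t) = √((kx + β̃t)² + k²y²), and ψ(x,y,t) = J₀(A). Then wherever A ≠ 0, ψ satisfies the linearized Rossby wave equation ∂_t(ψ_xx + ψ_yy − k_d²ψ) + β·ψ_x = 0. -/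
/-- Bessel function of the first kind of integer order `n`,
via the Bessel integral representation. -/
noncomputable def besselJ (n : ℤ) (z : ℝ) : ℝ :=
  (1 / Real.pi) * ∫ θ in (0:ℝ)..Real.pi, Real.cos (n * θ - z * Real.sin θ)

noncomputable def rossbyA (β kd k : ℝ) (x y t : ℝ) : ℝ :=
  Real.sqrt ((k * x + (β * k / (k ^ 2 + kd ^ 2)) * t) ^ 2 + k ^ 2 * y ^ 2)

noncomputable def rossbyPsi (β kd k : ℝ) (x y t : ℝ) : ℝ :=
  besselJ 0 (rossbyA β kd k x y t)

open Real MeasureTheory intervalIntegral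

noncomputable def J0 (z : ℝ) : ℝ :=
  (1/Real.pi) * ∫ θ in (0:ℝ)..Real.pi, Real.cos (z * Real.sin θ)
noncomputable def J0d (z : ℝ) : ℝ :=
  (1/Real.pi) * ∫ θ in (0:ℝ)..Real.pi, -(Real.sin θ * Real.sin (z * Real.sin θ))
noncomputable def J0dd (z : ℝ) : ℝ :=
  (1/Real.pi) * ∫ θ in (0:ℝ)..Real.pi, -(Real.sin θ ^ 2 * Real.cos (z * Real.sin θ))

lemma besselJ_zero_eq (z : ℝ) : besselJ 0 z = J0 z := by
  unfold besselJ J0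
  norm_num [Real.cos_neg]

lemma parderiv (F F' : ℝ → ℝ → ℝ)
    (hF : Continuous fun p : ℝ × ℝ => F p.1 p.2)
    (hF' : Continuous fun p : ℝ × ℝ => F' p.1 p.2)
    (hbound : ∀ z θ, |F' z θ| ≤ 1)
    (hderiv : ∀ z θ, HasDerivAt (fun w => F w θ) (F' z θ) z) (z : ℝ) :
    HasDerivAt (fun w => ∫ θ in (0:ℝ)..Real.pi, F w θ)
      (∫ θ in (0:ℝ)..Real.pi, F' z θ) z := by
  have h := intervalIntegral.hasDerivAt_integral_of_dominated_loc_of_deriv_le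
    (F := F) (F' := F') (x₀ := z) (a := 0) (b := Real.pi) (μ := volume)
    (bound := fun _ => 1) (s := Set.univ) Filter.univ_mem
    (Filter.Eventually.of_forall fun w =>
      ((hF.comp (continuous_const.prodMk continuous_id)).aestronglyMeasurable))
    ((hF.comp (continuous_const.prodMk continuous_id)).intervalIntegrable _ _)
    ((hF'.comp (continuous_const.prodMk continuous_id)).aestronglyMeasurable)
    (Filter.Eventually.of_forall fun θ _ w _ => by
      simpa using hbound w θ)
    (intervalIntegrable_const)
    (Filter.Eventually.of_forall fun θ _ w _ => hderiv w θ)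
  exact h.2

lemma hasDerivAt_J0 (z : ℝ) : HasDerivAt J0 (J0d z) z := by
  unfold J0 J0d
  refine HasDerivAt.const_mul _ ?_
  refine parderiv (fun w θ => Real.cos (w * Real.sin θ))
    (fun w θ => -(Real.sin θ * Real.sin (w * Real.sin θ))) (by fun_prop) (by fun_prop) ?_ ?_ z
  · intro w θ
    rw [abs_neg, abs_mul]
    calc |Real.sin θ| * |Real.sin (w * Real.sin θ)| ≤ 1 * 1 :=
      mul_le_mul (Real.abs_sin_le_one θ) (Real.abs_sin_le_one _) (abs_nonneg _) zero_le_one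
    _ = 1 := by ring
  · intro w θ
    have h1 : HasDerivAt (fun w : ℝ => w * Real.sin θ) (Real.sin θ) w := by
      simpa using (hasDerivAt_id w).mul_const (Real.sin θ)
    have := (Real.hasDerivAt_cos (w * Real.sin θ)).comp w h1
    exact this.congr_deriv (by ring)

lemma hasDerivAt_J0d (z : ℝ) : HasDerivAt J0d (J0dd z) z := by
  unfold J0d J0dd
  refine HasDerivAt.const_mul _ ?_
  refine parderiv (fun w θ => -(Real.sin θ * Real.sin (w * Real.sin θ)))
    (fun w θ => -(Real.sin θ ^ 2 * Real.cos (w * Real.sin θ))) (by fun_prop) (by fun_prop) ?_ ?_ z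
  · intro w θ
    rw [abs_neg, abs_mul]
    calc |Real.sin θ ^ 2| * |Real.cos (w * Real.sin θ)| ≤ 1 * 1 := by
          refine mul_le_mul ?_ (Real.abs_cos_le_one _) (abs_nonneg _) zero_le_one
          rw [abs_pow]
          exact pow_le_one₀ (abs_nonneg _) (Real.abs_sin_le_one θ)
    _ = 1 := by ring
  · intro w θ
    have h1 : HasDerivAt (fun w : ℝ => w * Real.sin θ) (Real.sin θ) w := by
      simpa using (hasDerivAt_id w).mul_const (Real.sin θ)
    have := ((Real.hasDerivAt_sin (w * Real.sin θ)).comp w h1).const_mul (Real.sin θ) |>.neg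
    exact this.congr_deriv (by ring)

lemma bessel_ode (z : ℝ) (hz : z ≠ 0) : J0dd z + J0d z / z + J0 z = 0 := by
  have key : (∫ θ in (0:ℝ)..Real.pi,
      (z * -(Real.sin θ ^ 2 * Real.cos (z * Real.sin θ)) +
       -(Real.sin θ * Real.sin (z * Real.sin θ)) + z * Real.cos (z * Real.sin θ))) = 0 := by
    have hd : ∀ θ ∈ Set.uIcc (0:ℝ) Real.pi,
        HasDerivAt (fun θ => Real.cos θ * Real.sin (z * Real.sin θ))
          (z * -(Real.sin θ ^ 2 * Real.cos (z * Real.sin θ)) +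
           -(Real.sin θ * Real.sin (z * Real.sin θ)) + z * Real.cos (z * Real.sin θ)) θ := by
      intro θ _
      have h1 : HasDerivAt (fun θ : ℝ => z * Real.sin θ) (z * Real.cos θ) θ :=
        (Real.hasDerivAt_sin θ).const_mul z
      have h2 : HasDerivAt (fun θ : ℝ => Real.sin (z * Real.sin θ))
          (Real.cos (z * Real.sin θ) * (z * Real.cos θ)) θ :=
        by have h2' := (Real.hasDerivAt_sin (z * Real.sin θ)).comp θ h1; exact h2'
      have h3 := (Real.hasDerivAt_cos θ).mul h2
      refine h3.congr_deriv (Eq.symm ?_)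
      have hpy := Real.sin_sq_add_cos_sq θ
      linear_combination (-(z * Real.cos (z * Real.sin θ))) * hpy
    rw [intervalIntegral.integral_eq_sub_of_hasDerivAt hd
      (Continuous.intervalIntegrable (by fun_prop) _ _)]
    simp
  have hi1 : IntervalIntegrable (fun θ => -(Real.sin θ ^ 2 * Real.cos (z * Real.sin θ)))
      volume 0 Real.pi := Continuous.intervalIntegrable (by fun_prop) _ _
  have hi2 : IntervalIntegrable (fun θ => -(Real.sin θ * Real.sin (z * Real.sin θ)))
      volume 0 Real.pi := Continuous.intervalIntegrable (by fun_prop) _ _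
  have hi3 : IntervalIntegrable (fun θ => Real.cos (z * Real.sin θ)) volume 0 Real.pi :=
    Continuous.intervalIntegrable (by fun_prop) _ _
  have hmain : z * J0dd z + J0d z + z * J0 z = 0 := by
    unfold J0 J0d J0dd
    have e1 : (∫ θ in (0:ℝ)..Real.pi,
        (z * -(Real.sin θ ^ 2 * Real.cos (z * Real.sin θ)) +
         -(Real.sin θ * Real.sin (z * Real.sin θ)) + z * Real.cos (z * Real.sin θ))) =
        z * (∫ θ in (0:ℝ)..Real.pi, -(Real.sin θ ^ 2 * Real.cos (z * Real.sin θ))) +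
        (∫ θ in (0:ℝ)..Real.pi, -(Real.sin θ * Real.sin (z * Real.sin θ))) +
        z * (∫ θ in (0:ℝ)..Real.pi, Real.cos (z * Real.sin θ)) := by
      rw [intervalIntegral.integral_add (((hi1.const_mul z)).add hi2) (hi3.const_mul z),
          intervalIntegral.integral_add (hi1.const_mul z) hi2,
          intervalIntegral.integral_const_mul, intervalIntegral.integral_const_mul]
    have h0 : z * (∫ θ in (0:ℝ)..Real.pi, -(Real.sin θ ^ 2 * Real.cos (z * Real.sin θ))) +
        (∫ θ in (0:ℝ)..Real.pi, -(Real.sin θ * Real.sin (z * Real.sin θ))) +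
        z * (∫ θ in (0:ℝ)..Real.pi, Real.cos (z * Real.sin θ)) = 0 := by
      rw [← e1]; exact key
    linear_combination (1/Real.pi) * h0
  field_simp
  linear_combination hmain

noncomputable def FF (m c d s : ℝ) : ℝ := Real.sqrt ((m * s + c) ^ 2 + d)

lemma hasDerivAt_FF {m c d s : ℝ} (h : 0 < (m * s + c) ^ 2 + d) :
    HasDerivAt (fun s' => FF m c d s') (m * (m * s + c) / FF m c d s) s := by
  have hne : FF m c d s ≠ 0 := (Real.sqrt_pos.mpr h).ne'
  have h1 : HasDerivAt (fun s' : ℝ => (m * s' + c) ^ 2 + d) (2 * (m * s + c) * m) s := by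
    have hu : HasDerivAt (fun s' : ℝ => m * s' + c) m s := by
      simpa using ((hasDerivAt_id s).const_mul m).add_const c
    simpa using (hu.pow 2).add_const d
  have h2 := (Real.hasDerivAt_sqrt h.ne').comp s h1
  have hs : Real.sqrt ((m * s + c) ^ 2 + d) = FF m c d s := rfl
  refine h2.congr_deriv (Eq.symm ?_)
  rw [hs]
  field_simp

lemma hasDerivAt_psiFF {m c d s : ℝ} (h : 0 < (m * s + c) ^ 2 + d) :
    HasDerivAt (fun s' => J0 (FF m c d s'))
      (J0d (FF m c d s) * (m * (m * s + c) / FF m c d s)) s :=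
  (hasDerivAt_J0 _).comp s (hasDerivAt_FF h)

lemma hasDerivAt_dpsiFF {m c d s : ℝ} (h : 0 < (m * s + c) ^ 2 + d) :
    HasDerivAt (fun s' => J0d (FF m c d s') * (m * (m * s' + c) / FF m c d s'))
      (J0dd (FF m c d s) * (m * (m * s + c) / FF m c d s) * (m * (m * s + c) / FF m c d s)
        + J0d (FF m c d s) *
          ((m * m * FF m c d s - m * (m * s + c) * (m * (m * s + c) / FF m c d s)) /
            FF m c d s ^ 2)) s := by
  have hne : FF m c d s ≠ 0 := (Real.sqrt_pos.mpr h).ne'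
  have hp : HasDerivAt (fun s' => J0d (FF m c d s'))
      (J0dd (FF m c d s) * (m * (m * s + c) / FF m c d s)) s :=
    (hasDerivAt_J0d _).comp s (hasDerivAt_FF h)
  have hnum : HasDerivAt (fun s' : ℝ => m * (m * s' + c)) (m * m) s := by
    simpa [mul_comm] using (((hasDerivAt_id s).const_mul m).add_const c).const_mul m
  have hq : HasDerivAt (fun s' => m * (m * s' + c) / FF m c d s')
      ((m * m * FF m c d s - m * (m * s + c) * (m * (m * s + c) / FF m c d s)) /
        FF m c d s ^ 2) s :=
    hnum.div (hasDerivAt_FF h) hne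
  exact hp.mul hq

lemma eventually_pos {m c d s : ℝ} (h : 0 < (m * s + c) ^ 2 + d) :
    ∀ᶠ s' in nhds s, 0 < (m * s' + c) ^ 2 + d := by
  have hc : Continuous (fun s' : ℝ => (m * s' + c) ^ 2 + d) := by continuity
  exact (hc.tendsto s).eventually (eventually_gt_nhds h)

lemma deriv2_psiFF {m c d s : ℝ} (h : 0 < (m * s + c) ^ 2 + d) :
    deriv (fun s' => deriv (fun s'' => J0 (FF m c d s'')) s') s =
      J0dd (FF m c d s) * (m * (m * s + c) / FF m c d s) * (m * (m * s + c) / FF m c d s)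
        + J0d (FF m c d s) *
          ((m * m * FF m c d s - m * (m * s + c) * (m * (m * s + c) / FF m c d s)) /
            FF m c d s ^ 2) := by
  have hev : (fun s' => deriv (fun s'' => J0 (FF m c d s'')) s') =ᶠ[nhds s]
      (fun s' => J0d (FF m c d s') * (m * (m * s' + c) / FF m c d s')) := by
    filter_upwards [eventually_pos h] with s' hs' using (hasDerivAt_psiFF hs').deriv
  rw [hev.deriv_eq]
  exact (hasDerivAt_dpsiFF h).deriv

lemma rossby_laplace (β kd k x y t : ℝ) (hA : rossbyA β kd k x y t ≠ 0) :
    deriv (fun x' => deriv (fun x'' => rossbyPsi β kd k x'' y t) x') x +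
      deriv (fun y' => deriv (fun y'' => rossbyPsi β kd k x y'' t) y') y
      = -(k ^ 2) * rossbyPsi β kd k x y t := by
  set b : ℝ := β * k / (k ^ 2 + kd ^ 2) with hb
  have hS : 0 < (k * x + b * t) ^ 2 + k ^ 2 * y ^ 2 := by
    have h0 : (0:ℝ) ≤ (k * x + b * t) ^ 2 + k ^ 2 * y ^ 2 := by positivity
    rcases h0.lt_or_eq with h | h
    · exact h
    · exfalso; apply hA; unfold rossbyA; rw [← hb, ← h, Real.sqrt_zero]
  have hS' : 0 < (k * y + 0) ^ 2 + (k * x + b * t) ^ 2 := by nlinarith [hS]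
  have hx : (fun x'' => rossbyPsi β kd k x'' y t) =
      fun x'' => J0 (FF k (b * t) (k ^ 2 * y ^ 2) x'') := by
    funext x''; unfold rossbyPsi; rw [besselJ_zero_eq]; rfl
  have hy : (fun y'' => rossbyPsi β kd k x y'' t) =
      fun y'' => J0 (FF k 0 ((k * x + b * t) ^ 2) y'') := by
    funext y''; unfold rossbyPsi; rw [besselJ_zero_eq]
    congr 1; unfold rossbyA FF; rw [← hb]; congr 1; ring
  have hFx : FF k (b * t) (k ^ 2 * y ^ 2) x = rossbyA β kd k x y t := rfl
  have hFy : FF k 0 ((k * x + b * t) ^ 2) y = rossbyA β kd k x y t := by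
    unfold rossbyA FF; rw [← hb]; congr 1; ring
  have hpsi : rossbyPsi β kd k x y t = J0 (rossbyA β kd k x y t) := by
    unfold rossbyPsi; rw [besselJ_zero_eq]
  rw [hx, hy, deriv2_psiFF hS, deriv2_psiFF hS', hFx, hFy, hpsi]
  set A := rossbyA β kd k x y t with hAdef
  have hA2 : A ^ 2 = (k * x + b * t) ^ 2 + k ^ 2 * y ^ 2 := by
    rw [hAdef]; unfold rossbyA; rw [← hb]; exact Real.sq_sqrt hS.le
  have ode := bessel_ode A hA
  have e : J0dd A * (k * (k * x + b * t) / A) * (k * (k * x + b * t) / A) +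
      J0d A * ((k * k * A - k * (k * x + b * t) * (k * (k * x + b * t) / A)) / A ^ 2) +
      (J0dd A * (k * (k * y + 0) / A) * (k * (k * y + 0) / A) +
        J0d A * ((k * k * A - k * (k * y + 0) * (k * (k * y + 0) / A)) / A ^ 2)) =
      k ^ 2 * (J0dd A + J0d A / A) := by
    field_simp
    linear_combination (k ^ 2 * J0d A - k ^ 2 * J0dd A * A) * hA2
  rw [e]
  have : J0dd A + J0d A / A = -J0 A := by linarith [ode]
  rw [this]; ring


/-- With `A = √((kx + β̃t)² + k²y²)`, `β̃ = βk/(k²+k_d²)`, the function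
`ψ = J₀(A)` satisfies the linearized Rossby wave equation
`∂_t(ψ_xx + ψ_yy − k_d²ψ) + β ψ_x = 0` wherever `A ≠ 0`. -/
theorem stmt6 (β kd k : ℝ) (hk : k ^ 2 + kd ^ 2 ≠ 0) (x y t : ℝ)
    (hA : rossbyA β kd k x y t ≠ 0) :
    deriv (fun t' =>
        deriv (fun x' => deriv (fun x'' => rossbyPsi β kd k x'' y t') x') x +
        deriv (fun y' => deriv (fun y'' => rossbyPsi β kd k x y'' t') y') y -
        kd ^ 2 * rossbyPsi β kd k x y t') t
      + β * deriv (fun x' => rossbyPsi β kd k x' y t) x = 0 := by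
  set b : ℝ := β * k / (k ^ 2 + kd ^ 2) with hb
  have hS : 0 < (k * x + b * t) ^ 2 + k ^ 2 * y ^ 2 := by
    have h0 : (0:ℝ) ≤ (k * x + b * t) ^ 2 + k ^ 2 * y ^ 2 := by positivity
    rcases h0.lt_or_eq with h | h
    · exact h
    · exfalso; apply hA; unfold rossbyA; rw [← hb, ← h, Real.sqrt_zero]
  have hSt : 0 < (b * t + k * x) ^ 2 + k ^ 2 * y ^ 2 := by nlinarith [hS]
  have hcont : Continuous fun t' => rossbyA β kd k x y t' := by
    unfold rossbyA; fun_prop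
  have hev : ∀ᶠ t' in nhds t, rossbyA β kd k x y t' ≠ 0 :=
    hcont.continuousAt.eventually_ne hA
  have heq : (fun t' =>
        deriv (fun x' => deriv (fun x'' => rossbyPsi β kd k x'' y t') x') x +
        deriv (fun y' => deriv (fun y'' => rossbyPsi β kd k x y'' t') y') y -
        kd ^ 2 * rossbyPsi β kd k x y t') =ᶠ[nhds t]
      (fun t' => -(k ^ 2 + kd ^ 2) * J0 (rossbyA β kd k x y t')) := by
    filter_upwards [hev] with t' h
    rw [rossby_laplace β kd k x y t' h]
    have hpsi : rossbyPsi β kd k x y t' = J0 (rossbyA β kd k x y t') := by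
      unfold rossbyPsi; rw [besselJ_zero_eq]
    rw [hpsi]; ring
  rw [heq.deriv_eq]
  have hrep : (fun t' => rossbyA β kd k x y t') =
      fun t' => FF b (k * x) (k ^ 2 * y ^ 2) t' := by
    funext t'; unfold rossbyA FF; rw [← hb]; congr 1; ring
  have hAt : FF b (k * x) (k ^ 2 * y ^ 2) t = rossbyA β kd k x y t := by
    unfold rossbyA FF; rw [← hb]; congr 1; ring
  have d1 : deriv (fun t' => -(k ^ 2 + kd ^ 2) * J0 (rossbyA β kd k x y t')) t =
      -(k ^ 2 + kd ^ 2) *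
        (J0d (rossbyA β kd k x y t) *
          (b * (b * t + k * x) / rossbyA β kd k x y t)) := by
    have : (fun t' => -(k ^ 2 + kd ^ 2) * J0 (rossbyA β kd k x y t')) =
        fun t' => -(k ^ 2 + kd ^ 2) * J0 (FF b (k * x) (k ^ 2 * y ^ 2) t') := by
      funext t'; rw [congrFun hrep t']
    rw [this, ← hAt]
    exact ((hasDerivAt_psiFF hSt).const_mul (-(k ^ 2 + kd ^ 2))).deriv
  have hx : (fun x' => rossbyPsi β kd k x' y t) =
      fun x' => J0 (FF k (b * t) (k ^ 2 * y ^ 2) x') := by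
    funext x'; unfold rossbyPsi; rw [besselJ_zero_eq]; rfl
  have hFx : FF k (b * t) (k ^ 2 * y ^ 2) x = rossbyA β kd k x y t := rfl
  have d2 : deriv (fun x' => rossbyPsi β kd k x' y t) x =
      J0d (rossbyA β kd k x y t) *
        (k * (k * x + b * t) / rossbyA β kd k x y t) := by
    rw [hx, ← hFx]
    exact (hasDerivAt_psiFF hS).deriv
  rw [d1, d2, hb]
  field_simp
  ring
end

section
/- For all real z and θ, exp(iz·sinθ) = ∑_{n=−∞}^{∞} J_n(z)·exp(inθ), where J_n is the Bessel function of the first kind of integer order n, and the series converges absolutely. -/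
open Complex Real intervalIntegral

noncomputable def jaG (z : ℝ) : ℝ → ℂ := fun θ => Complex.exp (Complex.I * z * Real.sin θ)
noncomputable def jaG' (z : ℝ) : ℝ → ℂ := fun θ => jaG z θ * (Complex.I * z * Real.cos θ)
noncomputable def jaG'' (z : ℝ) : ℝ → ℂ :=
  fun θ => jaG z θ * (Complex.I * z * Real.cos θ)^2 - jaG z θ * (Complex.I * z * Real.sin θ)

lemma jaG_deriv (z : ℝ) (θ : ℝ) : HasDerivAt (jaG z) (jaG' z θ) θ := by
  have h1 : HasDerivAt (fun x : ℝ => Complex.I * z * (Real.sin x : ℂ)) (Complex.I * z * Real.cos θ) θ :=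
    ((Real.hasDerivAt_sin θ).ofReal_comp).const_mul _
  exact h1.cexp

lemma jaG'_deriv (z : ℝ) (θ : ℝ) : HasDerivAt (jaG' z) (jaG'' z θ) θ := by
  have h1 := ((Real.hasDerivAt_cos θ).ofReal_comp).const_mul (Complex.I * z)
  have := (jaG_deriv z θ).mul h1
  convert this using 1
  · rfl
  · rfl
  simp only [jaG', jaG'', Complex.ofReal_neg]
  ring

lemma jaG_cont (z : ℝ) : Continuous (jaG z) := by
  unfold jaG; fun_prop

lemma jaG_norm (z : ℝ) (θ : ℝ) : ‖jaG z θ‖ = 1 := by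
  simp [jaG, Complex.norm_exp]

lemma jaG''_norm (z : ℝ) (θ : ℝ) : ‖jaG'' z θ‖ ≤ z^2 + |z| := by
  have h1 := jaG_norm z θ
  have := norm_sub_le (jaG z θ * (Complex.I * z * Real.cos θ)^2) (jaG z θ * (Complex.I * z * Real.sin θ))
  refine le_trans this ?_
  simp only [norm_mul, norm_pow, h1, one_mul, map_mul, Complex.norm_I,
    Complex.norm_real, Real.norm_eq_abs]
  have c1 : |Real.cos θ| ≤ 1 := Real.abs_cos_le_one θ
  have s1 : |Real.sin θ| ≤ 1 := Real.abs_sin_le_one θ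
  have hz : (0:ℝ) ≤ |z| := abs_nonneg z
  have b1 : (|z| * |Real.cos θ|)^2 ≤ z^2 := by
    rw [mul_pow]
    calc |z|^2 * |Real.cos θ|^2 ≤ |z|^2 * 1 := by
          apply mul_le_mul_of_nonneg_left _ (sq_nonneg _)
          exact pow_le_one₀ (abs_nonneg _) c1
      _ = z^2 := by rw [mul_one, _root_.sq_abs]
  have b2 : |z| * |Real.sin θ| ≤ |z| := mul_le_of_le_one_right hz s1
  linarith

lemma jaG'_cont (z : ℝ) : Continuous (jaG' z) := by
  unfold jaG' jaG; fun_prop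

lemma jaG''_cont (z : ℝ) : Continuous (jaG'' z) := by
  unfold jaG'' jaG; fun_prop

lemma jaG_periodic (z : ℝ) : Function.Periodic (jaG z) (2 * π) := by
  intro x; simp [jaG, Real.sin_add_two_pi]

instance : Fact ((0:ℝ) < 2 * π) := ⟨by positivity⟩

lemma lift_eq_liftIoc {f : ℝ → ℂ} (hf : Function.Periodic f (2 * π)) :
    AddCircle.liftIoc (2 * π) 0 f = hf.lift := by
  have hT : (0:ℝ) < 2 * π := by positivity
  funext q
  induction q using QuotientAddGroup.induction_on with | H x =>
  rw [Function.Periodic.lift_coe]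
  set y := toIocMod hT 0 x with hy
  have hmem : y ∈ Set.Ioc 0 (0 + 2 * π) := toIocMod_mem_Ioc hT 0 x
  have hval : f y = f x := by
    have : y = x - toIocDiv hT 0 x • (2 * π) := by
      rw [hy, toIocMod]
    rw [this, hf.sub_zsmul_eq]
  have hcoe : ((y : ℝ) : AddCircle (2 * π)) = ↑x := by
    rw [QuotientAddGroup.eq_iff_sub_mem]
    have : y - x = -(toIocDiv hT 0 x • (2 * π)) := by rw [hy, toIocMod]; ring
    rw [this]
    exact neg_mem (AddSubgroup.zsmul_mem_zmultiples _ _)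
  rw [← hcoe, AddCircle.liftIoc_coe_apply hmem, hval]

lemma twopi_pos : (0:ℝ) < 2 * π := by positivity

lemma fourierCoeff_lift_eq (z : ℝ) (n : ℤ) :
    fourierCoeff ((jaG_periodic z).lift) n = fourierCoeffOn twopi_pos (jaG z) n := by
  rw [← lift_eq_liftIoc (jaG_periodic z)]
  have := fourierCoeff_liftIoc_eq (T := 2 * π) (a := 0) (jaG z) n
  simp only [zero_add] at this
  exact this

lemma coeff_step (z : ℝ) (f f' : ℝ → ℂ) (hderiv : ∀ x, HasDerivAt f (f' x) x)
    (hcont : Continuous f') (hper : f (2 * π) = f 0) {n : ℤ} (hn : n ≠ 0) :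
    fourierCoeffOn twopi_pos f n = 1 / (Complex.I * n) * fourierCoeffOn twopi_pos f' n := by
  rw [fourierCoeffOn_of_hasDerivAt twopi_pos hn (fun x _ => hderiv x)
    (hcont.intervalIntegrable 0 (2 * π))]
  rw [hper, sub_self, mul_zero, zero_sub]
  have hn' : (n:ℂ) ≠ 0 := Int.cast_ne_zero.mpr hn
  have hπ : (π:ℂ) ≠ 0 := Complex.ofReal_ne_zero.mpr Real.pi_ne_zero
  push_cast
  field_simp [Complex.I_ne_zero]
  ring

lemma coeff''_bound (z : ℝ) (n : ℤ) :
    ‖fourierCoeffOn twopi_pos (jaG'' z) n‖ ≤ z ^ 2 + |z| := by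
  rw [fourierCoeffOn_eq_integral]
  have hbound : ∀ x ∈ Set.uIoc (0:ℝ) (2 * π),
      ‖(fourier (-n) (x : AddCircle (2 * π - 0)) : ℂ) • jaG'' z x‖ ≤ z ^ 2 + |z| := by
    intro x _
    rw [norm_smul]
    have h1 : ‖(fourier (-n) (x : AddCircle (2 * π - 0)) : ℂ)‖ = 1 := Circle.norm_coe _
    rw [h1, one_mul]
    exact jaG''_norm z x
  have := intervalIntegral.norm_integral_le_of_norm_le_const hbound
  rw [norm_smul]
  simp only [sub_zero] at this ⊢
  have h2 : ‖(1 / (2 * π) : ℝ)‖ * ((z ^ 2 + |z|) * |2 * π|) = z ^ 2 + |z| := by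
    rw [Real.norm_eq_abs, abs_of_pos (by positivity : (0:ℝ) < 1 / (2 * π)),
      abs_of_pos (by positivity : (0:ℝ) < 2 * π)]
    field_simp
  exact (mul_le_mul_of_nonneg_left this (norm_nonneg _)).trans (le_of_eq h2)

lemma coeff_decay (z : ℝ) {n : ℤ} (hn : n ≠ 0) :
    ‖fourierCoeffOn twopi_pos (jaG z) n‖ ≤ (z ^ 2 + |z|) / (n:ℝ) ^ 2 := by
  have hper1 : jaG z (2 * π) = jaG z 0 := by simp [jaG, Real.sin_two_pi]
  have hper2 : jaG' z (2 * π) = jaG' z 0 := by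
    simp [jaG', jaG, Real.sin_two_pi, Real.cos_two_pi]
  rw [coeff_step z (jaG z) (jaG' z) (jaG_deriv z) (jaG'_cont z) hper1 hn,
      coeff_step z (jaG' z) (jaG'' z) (jaG'_deriv z) (jaG''_cont z) hper2 hn]
  have hnorm : ‖(1 / (Complex.I * n) : ℂ)‖ = 1 / |(n:ℝ)| := by
    simp [norm_div, norm_mul]
  rw [norm_mul, norm_mul, hnorm]
  have hb := coeff''_bound z n
  have hn2 : (0:ℝ) < (n:ℝ) ^ 2 := by
    have : (n:ℝ) ≠ 0 := Int.cast_ne_zero.mpr hn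
    positivity
  have habs : (0:ℝ) < |(n:ℝ)| := abs_pos.mpr (Int.cast_ne_zero.mpr hn)
  have key : 1 / |(n:ℝ)| * (1 / |(n:ℝ)| * ‖fourierCoeffOn twopi_pos (jaG'' z) n‖)
      = ‖fourierCoeffOn twopi_pos (jaG'' z) n‖ / (n:ℝ) ^ 2 := by
    rw [← _root_.sq_abs]
    field_simp
  rw [key]
  exact div_le_div_of_nonneg_right hb hn2.le

lemma half_reflect (f : ℝ → ℝ) :
    ∫ x in (π:ℝ)..2 * π, f x = ∫ x in (0:ℝ)..π, f (2 * π - x) := by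
  rw [intervalIntegral.integral_comp_sub_left f (2 * π)]
  have h1 : 2 * π - π = π := by ring
  have h2 : 2 * π - 0 = 2 * π := by ring
  rw [h1, h2]

lemma sin_point (z : ℝ) (n : ℤ) (x : ℝ) :
    Real.sin (z * Real.sin (2 * π - x) - n * (2 * π - x))
      = -Real.sin (z * Real.sin x - n * x) := by
  rw [Real.sin_two_pi_sub]
  have : z * -Real.sin x - n * (2 * π - x)
      = -(z * Real.sin x - n * x) - n * (2 * π) := by ring
  rw [this, Real.sin_sub_int_mul_two_pi, Real.sin_neg]

lemma cos_point (z : ℝ) (n : ℤ) (x : ℝ) :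
    Real.cos (z * Real.sin (2 * π - x) - n * (2 * π - x))
      = Real.cos (z * Real.sin x - n * x) := by
  rw [Real.sin_two_pi_sub]
  have : z * -Real.sin x - n * (2 * π - x)
      = -(z * Real.sin x - n * x) - n * (2 * π) := by ring
  rw [this, Real.cos_sub_int_mul_two_pi, Real.cos_neg]

lemma sin_integral_zero (z : ℝ) (n : ℤ) :
    ∫ x in (0:ℝ)..2 * π, Real.sin (z * Real.sin x - n * x) = 0 := by
  have hc : ∀ a b : ℝ, IntervalIntegrable
      (fun x => Real.sin (z * Real.sin x - n * x)) MeasureTheory.volume a b := by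
    intro a b; apply Continuous.intervalIntegrable; fun_prop
  rw [← intervalIntegral.integral_add_adjacent_intervals (hc 0 π) (hc π (2 * π)),
    half_reflect]
  have : ∫ x in (0:ℝ)..π, Real.sin (z * Real.sin (2 * π - x) - n * (2 * π - x))
      = ∫ x in (0:ℝ)..π, -Real.sin (z * Real.sin x - n * x) := by
    apply intervalIntegral.integral_congr
    intro x _; exact sin_point z n x
  rw [this, intervalIntegral.integral_neg]
  ring

lemma cos_integral_eq (z : ℝ) (n : ℤ) :
    ∫ x in (0:ℝ)..2 * π, Real.cos (z * Real.sin x - n * x)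
      = 2 * ∫ x in (0:ℝ)..π, Real.cos (n * x - z * Real.sin x) := by
  have hc : ∀ a b : ℝ, IntervalIntegrable
      (fun x => Real.cos (z * Real.sin x - n * x)) MeasureTheory.volume a b := by
    intro a b; apply Continuous.intervalIntegrable; fun_prop
  rw [← intervalIntegral.integral_add_adjacent_intervals (hc 0 π) (hc π (2 * π)),
    half_reflect]
  have h1 : ∫ x in (0:ℝ)..π, Real.cos (z * Real.sin (2 * π - x) - n * (2 * π - x))
      = ∫ x in (0:ℝ)..π, Real.cos (z * Real.sin x - n * x) := by
    apply intervalIntegral.integral_congr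
    intro x _; exact cos_point z n x
  have h2 : ∫ x in (0:ℝ)..π, Real.cos (z * Real.sin x - n * x)
      = ∫ x in (0:ℝ)..π, Real.cos (n * x - z * Real.sin x) := by
    apply intervalIntegral.integral_congr
    intro x _
    show Real.cos (z * Real.sin x - n * x) = Real.cos (n * x - z * Real.sin x)
    rw [← Real.cos_neg (z * Real.sin x - n * x), neg_sub]
  rw [h1, h2]
  ring

lemma coeff_eq_besselJ (z : ℝ) (n : ℤ) :
    fourierCoeffOn twopi_pos (jaG z) n = (besselJ n z : ℂ) := by
  rw [fourierCoeffOn_eq_integral]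
  have step1 : ∀ x ∈ Set.uIcc (0:ℝ) (2 * π),
      (fun x : ℝ => (fourier (-n) (x : AddCircle (2 * π - 0)) : ℂ) • jaG z x) x
      = (fun x : ℝ => ((Real.cos (z * Real.sin x - n * x) : ℂ)
          + (Real.sin (z * Real.sin x - n * x) : ℂ) * Complex.I)) x := by
    intro x _
    show (fourier (-n) (x : AddCircle (2 * π - 0)) : ℂ) * jaG z x = _
    rw [fourier_coe_apply, jaG, ← Complex.exp_add]
    have harg : 2 * (π:ℂ) * Complex.I * (-n : ℤ) * x / ((2 * π - 0 : ℝ) : ℂ)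
        + Complex.I * z * Real.sin x
        = ((z * Real.sin x - n * x : ℝ) : ℂ) * Complex.I := by
      have hπ : ((π:ℝ) : ℂ) ≠ 0 := Complex.ofReal_ne_zero.mpr Real.pi_ne_zero
      push_cast
      field_simp
      ring
    rw [harg, Complex.exp_mul_I]
    simp
  rw [intervalIntegral.integral_congr step1]
  have int1 : IntervalIntegrable (fun x : ℝ => ((Real.cos (z * Real.sin x - n * x) : ℝ) : ℂ))
      MeasureTheory.volume 0 (2 * π) := by
    apply Continuous.intervalIntegrable; fun_prop
  have int2 : IntervalIntegrable (fun x : ℝ => ((Real.sin (z * Real.sin x - n * x) : ℝ) : ℂ) * Complex.I)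
      MeasureTheory.volume 0 (2 * π) := by
    apply Continuous.intervalIntegrable; fun_prop
  rw [intervalIntegral.integral_add int1 int2, intervalIntegral.integral_mul_const,
    intervalIntegral.integral_ofReal, intervalIntegral.integral_ofReal,
    sin_integral_zero, cos_integral_eq]
  rw [besselJ]
  push_cast
  rw [Complex.real_smul]
  have hπ : ((π:ℝ) : ℂ) ≠ 0 := Complex.ofReal_ne_zero.mpr Real.pi_ne_zero
  push_cast
  field_simp
  ring

/-- Jacobi–Anger expansion: `exp(iz sinθ) = ∑_{n∈ℤ} J_n(z) e^{inθ}`,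
with absolute convergence of the series. -/
theorem stmt9 (z θ : ℝ) :
    Summable (fun n : ℤ =>
      ‖(besselJ n z : ℂ) * Complex.exp (Complex.I * (n : ℂ) * (θ : ℂ))‖) ∧
    HasSum (fun n : ℤ => (besselJ n z : ℂ) * Complex.exp (Complex.I * (n : ℂ) * (θ : ℂ)))
      (Complex.exp (Complex.I * (z : ℂ) * (Real.sin θ : ℂ))) := by
  set F : C(AddCircle (2 * π), ℂ) :=
    ⟨(jaG_periodic z).lift, continuous_coinduced_dom.mpr (jaG_cont z)⟩ with hF
  have hFc : ⇑F = (jaG_periodic z).lift := rfl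
  have hcoeff : ∀ n : ℤ, fourierCoeff (⇑F) n = (besselJ n z : ℂ) := fun n => by
    rw [hFc, fourierCoeff_lift_eq, coeff_eq_besselJ]
  have hnormsum : Summable (fun n : ℤ => ‖fourierCoeff (⇑F) n‖) := by
    apply Summable.of_norm_bounded_eventually (g := fun n : ℤ => (z ^ 2 + |z|) * (1 / (n:ℝ) ^ 2))
      ((summable_one_div_int_pow.mpr one_lt_two).mul_left _)
    rw [Filter.eventually_cofinite]
    apply Set.Finite.subset (Set.finite_singleton (0:ℤ))
    intro n hn
    simp only [Set.mem_setOf_eq, Set.mem_singleton_iff] at *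
    by_contra h
    apply hn
    rw [norm_norm, hFc, fourierCoeff_lift_eq]
    calc ‖fourierCoeffOn twopi_pos (jaG z) n‖ ≤ (z ^ 2 + |z|) / (n:ℝ) ^ 2 := coeff_decay z h
      _ = (z ^ 2 + |z|) * (1 / (n:ℝ) ^ 2) := by ring
  have hsummable : Summable (fourierCoeff (⇑F)) := hnormsum.of_norm
  have hs := has_pointwise_sum_fourier_series_of_summable hsummable (θ : AddCircle (2 * π))
  have hterm : ∀ i : ℤ, fourierCoeff (⇑F) i • fourier i (θ : AddCircle (2 * π))
      = (besselJ i z : ℂ) * Complex.exp (Complex.I * (i : ℂ) * (θ : ℂ)) := by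
    intro i
    rw [hcoeff i, smul_eq_mul, fourier_coe_apply]
    congr 1
    have hπ : ((π:ℝ) : ℂ) ≠ 0 := Complex.ofReal_ne_zero.mpr Real.pi_ne_zero
    push_cast
    congr 1
    rw [div_eq_iff (by norm_num [Complex.ofReal_ne_zero, Real.pi_ne_zero] : (2*(π:ℂ)) ≠ 0)]
    ring
  have hval : F (θ : AddCircle (2 * π)) = Complex.exp (Complex.I * z * Real.sin θ) := by
    rw [hFc, Function.Periodic.lift_coe]
    rfl
  have hexp1 : ∀ i : ℤ, ‖Complex.exp (Complex.I * (i : ℂ) * (θ : ℂ))‖ = 1 := by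
    intro i
    rw [Complex.norm_exp]
    have : (Complex.I * (i : ℂ) * (θ : ℂ)).re = 0 := by simp
    rw [this, Real.exp_zero]
  constructor
  · have heq : (fun n : ℤ => ‖(besselJ n z : ℂ) * Complex.exp (Complex.I * (n : ℂ) * (θ : ℂ))‖)
        = fun n : ℤ => ‖fourierCoeff (⇑F) n‖ := by
      funext n
      rw [hcoeff n, norm_mul, hexp1 n, mul_one]
    rw [heq]
    exact hnormsum
  · rw [funext hterm, hval] at hs
    exact hs
end

section
/- Let ω̄ be a non-integer real number, a real, and define I(Φ) = exp(i(ω̄Φ + a·sinΦ)) and the constant C = i·∑_{n=−∞}^{∞} J_n(a)/(ω̄ + n). Then the function ψ̄(Φ) = exp(−i(ω̄Φ + a·sinΦ))·[C − ∫₀^Φ I(Φ')dΦ'] solves the ODE dψ̄/dΦ + i(ω̄ + a·cosΦ)·ψ̄ = −1 and is 2π-periodic: ψ̄(Φ + 2π) = ψ̄(Φ) for all Φ. -/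
/-- Integrating factor `I(Φ) = exp(i(ω̄Φ + a sinΦ))`. -/
noncomputable def intFac (ω a : ℝ) (Φ : ℝ) : ℂ :=
  Complex.exp (Complex.I * ((ω : ℂ) * (Φ : ℂ) + (a : ℂ) * (Real.sin Φ : ℂ)))

/-- `ψ̄(Φ) = exp(−i(ω̄Φ + a sinΦ))·(C − ∫₀^Φ I)`, with
`C = i ∑_{n∈ℤ} J_n(a)/(ω̄+n)`. -/
noncomputable def psiBar (ω a : ℝ) (Φ : ℝ) : ℂ :=
  Complex.exp (-(Complex.I * ((ω : ℂ) * (Φ : ℂ) + (a : ℂ) * (Real.sin Φ : ℂ)))) *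
    ((Complex.I * ∑' n : ℤ, (besselJ n a : ℂ) / ((ω : ℂ) + (n : ℂ))) -
      ∫ Φ' in (0:ℝ)..Φ, intFac ω a Φ')


open Complex MeasureTheory intervalIntegral Real


noncomputable def jaF (a : ℝ) : ℝ → ℂ := fun x => Complex.exp (Complex.I * a * Real.sin x)

lemma jaF_cont (a : ℝ) : Continuous (jaF a) := by unfold jaF; fun_prop

lemma jaF_per (a : ℝ) : Function.Periodic (jaF a) (2 * Real.pi) := by
  intro x; simp [jaF, Real.sin_add_two_pi]

noncomputable def jaC (a : ℝ) : C(AddCircle (2 * Real.pi), ℂ) :=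
  ⟨(jaF_per a).lift, continuous_coinduced_dom.mpr (jaF_cont a)⟩

lemma jaC_coe (a : ℝ) (x : ℝ) : jaC a (x : AddCircle (2 * Real.pi)) = jaF a x :=
  Function.Periodic.lift_coe (jaF_per a) x

-- sin integral vanishes
lemma sin_int_zero (a : ℝ) (n : ℤ) :
    ∫ x in (0:ℝ)..(2*Real.pi), Real.sin (a * Real.sin x - n * x) = 0 := by
  have h1 : ∫ x in (0:ℝ)..(2*Real.pi), Real.sin (a * Real.sin (2*Real.pi - x) - n * (2*Real.pi - x))
      = ∫ x in (0:ℝ)..(2*Real.pi), Real.sin (a * Real.sin x - n * x) := by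
    have h := intervalIntegral.integral_comp_sub_left
      (a := 0) (b := 2*Real.pi) (fun x => Real.sin (a * Real.sin x - n * x)) (2*Real.pi)
    rwa [show 2*Real.pi - 2*Real.pi = 0 by ring, sub_zero] at h
  have h2 : ∀ x : ℝ, Real.sin (a * Real.sin (2*Real.pi - x) - n * (2*Real.pi - x))
      = - Real.sin (a * Real.sin x - n * x) := by
    intro x
    have : a * Real.sin (2*Real.pi - x) - n * (2*Real.pi - x)
        = (-(a * Real.sin x - n * x)) + (-n : ℤ) * (2*Real.pi) := by
      rw [Real.sin_two_pi_sub]; push_cast; ring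
    rw [this, Real.sin_add_int_mul_two_pi, Real.sin_neg]
  simp_rw [h2] at h1
  rw [intervalIntegral.integral_neg] at h1
  linarith [h1]

-- cos integral doubles
lemma cos_int_double (a : ℝ) (n : ℤ) :
    ∫ x in (0:ℝ)..(2*Real.pi), Real.cos (a * Real.sin x - n * x)
      = 2 * ∫ x in (0:ℝ)..Real.pi, Real.cos (n * x - a * Real.sin x) := by
  have heq : ∀ x : ℝ, Real.cos (a * Real.sin x - n * x) = Real.cos (n * x - a * Real.sin x) := by
    intro x; rw [← Real.cos_neg]; ring_nf
  simp_rw [heq]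
  have hsplit : ∫ x in (0:ℝ)..(2*Real.pi), Real.cos (n * x - a * Real.sin x)
      = (∫ x in (0:ℝ)..Real.pi, Real.cos (n * x - a * Real.sin x))
        + ∫ x in Real.pi..(2*Real.pi), Real.cos (n * x - a * Real.sin x) := by
    rw [intervalIntegral.integral_add_adjacent_intervals] <;>
      exact (by fun_prop : Continuous fun x : ℝ => Real.cos (n * x - a * Real.sin x)).intervalIntegrable _ _
  have h1 : ∫ x in (0:ℝ)..Real.pi, Real.cos (n * (2*Real.pi - x) - a * Real.sin (2*Real.pi - x))
      = ∫ x in Real.pi..(2*Real.pi), Real.cos (n * x - a * Real.sin x) := by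
    have h := intervalIntegral.integral_comp_sub_left
      (a := 0) (b := Real.pi) (fun x => Real.cos (n * x - a * Real.sin x)) (2*Real.pi)
    rwa [show 2*Real.pi - Real.pi = Real.pi by ring, sub_zero] at h
  have h2 : ∀ x : ℝ, Real.cos (n * (2*Real.pi - x) - a * Real.sin (2*Real.pi - x))
      = Real.cos (n * x - a * Real.sin x) := by
    intro x
    have : n * (2*Real.pi - x) - a * Real.sin (2*Real.pi - x)
        = (-(n * x - a * Real.sin x)) + (n : ℤ) * (2*Real.pi) := by
      rw [Real.sin_two_pi_sub]; push_cast; ring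
    rw [this, Real.cos_add_int_mul_two_pi, Real.cos_neg]
  simp_rw [h2] at h1
  rw [hsplit, ← h1]; ring

lemma exp_int_eq (a : ℝ) (n : ℤ) :
    ∫ x in (0:ℝ)..(2*Real.pi), Complex.exp (((a * Real.sin x - n * x : ℝ)) * Complex.I)
      = ((2 * Real.pi * besselJ n a : ℝ) : ℂ) := by
  have hre : Continuous fun x : ℝ => Real.cos (a * Real.sin x - n * x) := by fun_prop
  have him : Continuous fun x : ℝ => Real.sin (a * Real.sin x - n * x) := by fun_prop
  calc ∫ x in (0:ℝ)..(2*Real.pi), Complex.exp (((a * Real.sin x - n * x : ℝ)) * Complex.I)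
      = ∫ x in (0:ℝ)..(2*Real.pi),
          (((Real.cos (a * Real.sin x - n * x) : ℝ) : ℂ)
            + ((Real.sin (a * Real.sin x - n * x) : ℝ) : ℂ) * Complex.I) := by
        apply intervalIntegral.integral_congr; intro x _
        show Complex.exp _ = _
        rw [Complex.exp_mul_I]
        norm_cast
    _ = ((∫ x in (0:ℝ)..(2*Real.pi), Real.cos (a * Real.sin x - n * x) : ℝ) : ℂ)
          + ((∫ x in (0:ℝ)..(2*Real.pi), Real.sin (a * Real.sin x - n * x) : ℝ) : ℂ) * Complex.I := by
        rw [intervalIntegral.integral_add, intervalIntegral.integral_mul_const,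
          intervalIntegral.integral_ofReal, intervalIntegral.integral_ofReal]
        · exact ((Complex.continuous_ofReal.comp hre).intervalIntegrable _ _)
        · exact (((Complex.continuous_ofReal.comp him).mul continuous_const).intervalIntegrable _ _)
    _ = ((2 * Real.pi * besselJ n a : ℝ) : ℂ) := by
        rw [sin_int_zero, cos_int_double, besselJ]
        have : (Real.pi : ℂ) ≠ 0 := by exact_mod_cast Real.pi_ne_zero
        field_simp
        simp

instance : Fact (0 < 2 * Real.pi) := ⟨by positivity⟩

lemma two_pi_pos' : (0:ℝ) < 2 * Real.pi := by positivity

lemma fourier_norm_one (n : ℤ) (x : ℝ) (T : ℝ) : ‖fourier n (x : AddCircle T)‖ = 1 := by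
  rw [fourier_coe_apply,
    show (2*(Real.pi:ℂ)*Complex.I*n*x/T : ℂ) = ((2*Real.pi*n*x/T : ℝ) : ℂ) * Complex.I by
      push_cast; ring,
    Complex.norm_exp_ofReal_mul_I]

lemma integrand_eq (a : ℝ) (n : ℤ) (T : ℝ) (hT : T = 2 * Real.pi) (x : ℝ) :
    fourier (-n) (x : AddCircle T) • jaF a x
      = Complex.exp (((a * Real.sin x - n * x : ℝ)) * Complex.I) := by
  rw [smul_eq_mul, fourier_coe_apply, jaF, ← Complex.exp_add]
  congr 1
  subst hT
  have hπ : (Real.pi : ℂ) ≠ 0 := by exact_mod_cast Real.pi_ne_zero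
  push_cast
  field_simp
  ring

lemma fourierCoeff_jaC (a : ℝ) (n : ℤ) :
    fourierCoeff (⇑(jaC a)) n = ((besselJ n a : ℝ) : ℂ) := by
  rw [fourierCoeff_eq_intervalIntegral (⇑(jaC a)) n 0, zero_add]
  have h : ∀ x ∈ Set.uIcc (0:ℝ) (2*Real.pi),
      fourier (-n) (x : AddCircle (2*Real.pi)) • jaC a (x : AddCircle (2*Real.pi))
        = Complex.exp (((a * Real.sin x - n * x : ℝ)) * Complex.I) := by
    intro x _
    rw [jaC_coe]
    exact integrand_eq a n _ rfl x
  rw [intervalIntegral.integral_congr h, exp_int_eq]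
  rw [real_smul]
  push_cast
  have hπ : (Real.pi : ℂ) ≠ 0 := by exact_mod_cast Real.pi_ne_zero
  field_simp

lemma fourierCoeffOn_jaF (a : ℝ) (n : ℤ) :
    fourierCoeffOn two_pi_pos' (jaF a) n = ((besselJ n a : ℝ) : ℂ) := by
  rw [fourierCoeffOn_eq_integral]
  have h : ∀ x ∈ Set.uIcc (0:ℝ) (2*Real.pi),
      fourier (-n) (x : AddCircle (2*Real.pi - 0)) • jaF a x
        = Complex.exp (((a * Real.sin x - n * x : ℝ)) * Complex.I) :=
    fun x _ => integrand_eq a n _ (by ring) x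
  rw [intervalIntegral.integral_congr h, exp_int_eq]
  rw [real_smul]
  push_cast
  have hπ : (Real.pi : ℂ) ≠ 0 := by exact_mod_cast Real.pi_ne_zero
  field_simp
  rw [sub_zero]

noncomputable def jaF1 (a : ℝ) : ℝ → ℂ := fun x => jaF a x * (Complex.I * a * Real.cos x)
noncomputable def jaF2 (a : ℝ) : ℝ → ℂ := fun x =>
  jaF1 a x * (Complex.I * a * Real.cos x) + jaF a x * (Complex.I * a * ((-Real.sin x : ℝ) : ℂ))

lemma hasDerivAt_jaF (a : ℝ) (x : ℝ) : HasDerivAt (jaF a) (jaF1 a x) x := by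
  have h : HasDerivAt (fun x : ℝ => Complex.I * a * (Real.sin x : ℂ))
      (Complex.I * a * (Real.cos x : ℂ)) x :=
    ((Real.hasDerivAt_sin x).ofReal_comp).const_mul (Complex.I * a)
  exact h.cexp

lemma hasDerivAt_coscoef (a : ℝ) (x : ℝ) :
    HasDerivAt (fun x : ℝ => Complex.I * a * (Real.cos x : ℂ))
      (Complex.I * a * (-Real.sin x : ℝ)) x :=
  ((Real.hasDerivAt_cos x).ofReal_comp).const_mul (Complex.I * a)

lemma hasDerivAt_jaF1 (a : ℝ) (x : ℝ) : HasDerivAt (jaF1 a) (jaF2 a x) x := by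
  exact (hasDerivAt_jaF a x).mul (hasDerivAt_coscoef a x)

lemma jaF_norm (a : ℝ) (x : ℝ) : ‖jaF a x‖ = 1 := by
  rw [jaF,
    show (Complex.I * a * (Real.sin x : ℂ)) = ((a * Real.sin x : ℝ) : ℂ) * Complex.I by
      push_cast; ring,
    Complex.norm_exp_ofReal_mul_I]

lemma coscoef_norm (a : ℝ) (x : ℝ) : ‖Complex.I * a * (Real.cos x : ℂ)‖ ≤ |a| := by
  rw [norm_mul, norm_mul]
  simp only [Complex.norm_I, one_mul, Complex.norm_real, Real.norm_eq_abs]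
  calc |a| * |Real.cos x| ≤ |a| * 1 := by
        exact mul_le_mul_of_nonneg_left (Real.abs_cos_le_one x) (abs_nonneg a)
    _ = |a| := mul_one _

lemma jaF2_norm (a : ℝ) (x : ℝ) : ‖jaF2 a x‖ ≤ a^2 + |a| := by
  rw [jaF2]
  refine (norm_add_le _ _).trans ?_
  have h1 : ‖jaF1 a x * (Complex.I * a * (Real.cos x : ℂ))‖ ≤ a^2 := by
    rw [norm_mul, jaF1, norm_mul, jaF_norm, one_mul]
    calc ‖Complex.I * ↑a * ↑(Real.cos x)‖ * ‖Complex.I * ↑a * ↑(Real.cos x)‖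
        ≤ |a| * |a| := mul_le_mul (coscoef_norm a x) (coscoef_norm a x) (norm_nonneg _) (abs_nonneg a)
      _ = a^2 := by rw [← abs_mul, ← sq, abs_sq]
  have h2 : ‖jaF a x * (Complex.I * a * (-Real.sin x : ℝ))‖ ≤ |a| := by
    rw [norm_mul, jaF_norm, one_mul, norm_mul, norm_mul]
    simp only [Complex.norm_I, one_mul, Complex.norm_real, Real.norm_eq_abs, abs_neg]
    calc |a| * |Real.sin x| ≤ |a| * 1 :=
          mul_le_mul_of_nonneg_left (Real.abs_sin_le_one x) (abs_nonneg a)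
      _ = |a| := mul_one _
  have h3 := add_le_add h1 h2
  push_cast at h3 ⊢
  linarith

lemma jaF_cont1 (a : ℝ) : Continuous (jaF1 a) := by
  unfold jaF1 jaF; fun_prop

lemma jaF_cont2 (a : ℝ) : Continuous (jaF2 a) := by
  unfold jaF2 jaF1 jaF; fun_prop

lemma fcOn_jaF2_bound (a : ℝ) (n : ℤ) :
    ‖fourierCoeffOn two_pi_pos' (jaF2 a) n‖ ≤ a^2 + |a| := by
  rw [fourierCoeffOn_eq_integral]
  rw [norm_smul]
  have hb : ∀ x ∈ Set.uIoc (0:ℝ) (2*Real.pi),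
      ‖fourier (-n) (x : AddCircle (2*Real.pi - 0)) • jaF2 a x‖ ≤ a^2 + |a| := by
    intro x _
    rw [norm_smul, fourier_norm_one, one_mul]
    exact jaF2_norm a x
  have := intervalIntegral.norm_integral_le_of_norm_le_const hb
  have hpos : (0:ℝ) < 2 * Real.pi := two_pi_pos'
  have hnn : (0:ℝ) ≤ a^2 + |a| := by positivity
  calc ‖(1 / (2*Real.pi - 0) : ℝ)‖ * ‖∫ x in (0:ℝ)..(2*Real.pi), fourier (-n) (x : AddCircle (2*Real.pi - 0)) • jaF2 a x‖
      ≤ ‖(1 / (2*Real.pi - 0) : ℝ)‖ * ((a^2 + |a|) * |2*Real.pi - 0|) := by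
        exact mul_le_mul_of_nonneg_left this (norm_nonneg _)
    _ = a^2 + |a| := by
        rw [Real.norm_eq_abs, sub_zero, abs_of_pos (by positivity : (0:ℝ) < 1/(2*Real.pi)),
          abs_of_pos hpos]
        field_simp

lemma fcOn_step {n : ℤ} (hn : n ≠ 0) (f g : ℝ → ℂ) (hderiv : ∀ x, HasDerivAt f (g x) x)
    (hg : Continuous g) (hper : f (2*Real.pi) = f 0) :
    fourierCoeffOn two_pi_pos' f n = (1/(Complex.I * n)) * fourierCoeffOn two_pi_pos' g n := by
  rw [fourierCoeffOn_of_hasDerivAt two_pi_pos' hn (fun x _ => hderiv x)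
    (hg.intervalIntegrable _ _), hper]
  have hπ : (Real.pi : ℂ) ≠ 0 := by exact_mod_cast Real.pi_ne_zero
  have hn' : (n:ℂ) ≠ 0 := Int.cast_ne_zero.mpr hn
  push_cast
  field_simp
  ring

lemma fc_decay (a : ℝ) {n : ℤ} (hn : n ≠ 0) :
    ‖fourierCoeff (⇑(jaC a)) n‖ ≤ (a^2 + |a|) * (1/(n:ℝ)^2) := by
  have hper1 : jaF a (2*Real.pi) = jaF a 0 := by simp [jaF]
  have hper2 : jaF1 a (2*Real.pi) = jaF1 a 0 := by simp [jaF1, jaF]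
  have e1 := fcOn_step hn (jaF a) (jaF1 a) (hasDerivAt_jaF a) (jaF_cont1 a) hper1
  have e2 := fcOn_step hn (jaF1 a) (jaF2 a) (hasDerivAt_jaF1 a) (jaF_cont2 a) hper2
  have key : fourierCoeff (⇑(jaC a)) n
      = (1/(Complex.I * n)) * ((1/(Complex.I * n)) * fourierCoeffOn two_pi_pos' (jaF2 a) n) := by
    rw [fourierCoeff_jaC, ← fourierCoeffOn_jaF, e1, e2]
  rw [key]
  rw [norm_mul, norm_mul]
  have hnorm : ‖(1/(Complex.I * (n:ℂ)) : ℂ)‖ = 1/|(n:ℝ)| := by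
    rw [norm_div, norm_one, norm_mul, Complex.norm_I, one_mul]
    norm_cast
  rw [hnorm]
  have hb := fcOn_jaF2_bound a n
  have hpos : (0:ℝ) < |(n:ℝ)| := by
    simp only [abs_pos]
    exact_mod_cast hn
  calc 1/|(n:ℝ)| * (1/|(n:ℝ)| * ‖fourierCoeffOn two_pi_pos' (jaF2 a) n‖)
      ≤ 1/|(n:ℝ)| * (1/|(n:ℝ)| * (a^2 + |a|)) := by
        apply mul_le_mul_of_nonneg_left _ (by positivity)
        exact mul_le_mul_of_nonneg_left hb (by positivity)
    _ = (a^2 + |a|) * (1/(n:ℝ)^2) := by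
        rw [← _root_.sq_abs ((n:ℤ):ℝ)]
        field_simp
  
lemma summable_fc (a : ℝ) : Summable (fourierCoeff (⇑(jaC a))) := by
  apply Summable.of_norm_bounded_eventually (g := fun n : ℤ => (a^2 + |a|) * (1/(n:ℝ)^2))
  · exact ((Real.summable_one_div_int_pow (p := 2)).mpr one_lt_two).mul_left _
  · apply Filter.eventually_cofinite.mpr
    apply (Set.finite_singleton (0:ℤ)).subset
    intro n hn
    by_contra h0
    exact hn (fc_decay a (by simpa using h0))

lemma summable_besselJ (a : ℝ) : Summable (fun n : ℤ => |besselJ n a|) := by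
  have := (summable_norm_iff.mpr (summable_fc a))
  convert this using 2 with n
  rw [fourierCoeff_jaC]
  simp

lemma jacobi_anger (a : ℝ) (x : ℝ) :
    HasSum (fun n : ℤ => ((besselJ n a : ℝ) : ℂ) * fourier n ((x:ℝ) : AddCircle (2*Real.pi)))
      (jaF a x) := by
  have h := has_pointwise_sum_fourier_series_of_summable (summable_fc a)
    ((x:ℝ) : AddCircle (2*Real.pi))
  simp_rw [fourierCoeff_jaC, smul_eq_mul] at h
  rwa [jaC_coe] at h

lemma expIω_norm (ω : ℝ) (x : ℝ) : ‖Complex.exp (Complex.I*ω*x)‖ = 1 := by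
  rw [show (Complex.I*(ω:ℂ)*(x:ℂ) : ℂ) = ((ω*x : ℝ):ℂ) * Complex.I by push_cast; ring,
    Complex.norm_exp_ofReal_mul_I]

lemma intFac_split (ω a : ℝ) (x : ℝ) :
    intFac ω a x = Complex.exp (Complex.I*ω*x) * jaF a x := by
  rw [intFac, jaF, ← Complex.exp_add]; congr 1; ring

lemma key_integral (ω a : ℝ) (hω : ∀ n : ℤ, ω ≠ (n:ℝ)) :
    ∫ Φ in (0:ℝ)..(2*Real.pi), intFac ω a Φ
      = (1 - Complex.exp (2*Real.pi*Complex.I*ω)) *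
        (Complex.I * ∑' n : ℤ, ((besselJ n a : ℝ):ℂ) / ((ω:ℂ) + (n:ℂ))) := by
  have hπ : (Real.pi:ℂ) ≠ 0 := by exact_mod_cast Real.pi_ne_zero
  have hω' : ∀ n : ℤ, (ω:ℂ) + (n:ℂ) ≠ 0 := by
    intro n h
    apply hω (-n)
    have h2 : (ω:ℂ) = ((-n : ℤ) : ℂ) := by push_cast; linear_combination h
    exact_mod_cast h2
  set E := Complex.exp (2*Real.pi*Complex.I*ω) with hE
  have hcontn : ∀ n : ℤ, Continuous (fun x : ℝ =>
      ((besselJ n a : ℝ):ℂ) * (Complex.exp (Complex.I*ω*x) * fourier n (x : AddCircle (2*Real.pi)))) := by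
    intro n
    exact continuous_const.mul
      ((by fun_prop : Continuous fun x:ℝ => Complex.exp (Complex.I*(ω:ℂ)*(x:ℂ))).mul
        ((map_continuous (fourier n)).comp (AddCircle.continuous_mk' _)))
  set Fn : ℤ → C(ℝ, ℂ) := fun n =>
    ⟨fun x => ((besselJ n a : ℝ):ℂ) *
        (Complex.exp (Complex.I*ω*x) * fourier n (x : AddCircle (2*Real.pi))), hcontn n⟩ with hFn
  have hnorm : ∀ (n : ℤ) (x : ℝ), ‖Fn n x‖ = |besselJ n a| := by
    intro n x
    show ‖((besselJ n a : ℝ):ℂ) * (Complex.exp (Complex.I*ω*x) * fourier n (x : AddCircle (2*Real.pi)))‖ = _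
    rw [norm_mul, norm_mul, expIω_norm, fourier_norm_one, Complex.norm_real, Real.norm_eq_abs]
    ring
  have hsummable : Summable fun n : ℤ =>
      ‖ContinuousMap.restrict (↑(⟨Set.uIcc (0:ℝ) (2*Real.pi), isCompact_uIcc⟩ :
          TopologicalSpace.Compacts ℝ)) (Fn n)‖ := by
    apply Summable.of_nonneg_of_le (fun n => norm_nonneg _) _ (summable_besselJ a)
    intro n
    apply (ContinuousMap.norm_le _ (abs_nonneg _)).mpr
    rintro ⟨x, hx⟩
    rw [ContinuousMap.restrict_apply]
    exact le_of_eq (hnorm n x)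
  have hswap := intervalIntegral.tsum_intervalIntegral_eq_of_summable_norm
    (a := 0) (b := 2*Real.pi) hsummable
  have hpt : ∀ x : ℝ, HasSum (fun n : ℤ => Fn n x) (intFac ω a x) := by
    intro x
    have h := (jacobi_anger a x).mul_left (Complex.exp (Complex.I*ω*x))
    rw [intFac_split]
    convert h using 2 with n
    show ((besselJ n a : ℝ):ℂ) * (Complex.exp (Complex.I*ω*x) * fourier n _) = _
    ring
    rfl
  have hterm : ∀ n : ℤ, (∫ x in (0:ℝ)..(2*Real.pi), Fn n x)
      = ((1-E)*Complex.I) * (((besselJ n a : ℝ):ℂ) / ((ω:ℂ)+(n:ℂ))) := by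
    intro n
    have h1 : ∀ x ∈ Set.uIcc (0:ℝ) (2*Real.pi), Fn n x
        = ((besselJ n a : ℝ):ℂ) * Complex.exp ((Complex.I*((ω:ℂ)+(n:ℂ))) * (x:ℂ)) := by
      intro x _
      show ((besselJ n a : ℝ):ℂ) * (Complex.exp (Complex.I*ω*x) * fourier n _) = _
      rw [fourier_coe_apply, ← Complex.exp_add]
      congr 2
      push_cast
      field_simp
    have hc : Complex.I*((ω:ℂ)+(n:ℂ)) ≠ 0 := mul_ne_zero Complex.I_ne_zero (hω' n)
    rw [intervalIntegral.integral_congr h1, intervalIntegral.integral_const_mul,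
      integral_exp_mul_complex hc]
    have he : Complex.exp (Complex.I*((ω:ℂ)+(n:ℂ)) * ((2*Real.pi : ℝ):ℂ)) = E := by
      rw [hE, show Complex.I*((ω:ℂ)+(n:ℂ))*((2*Real.pi : ℝ):ℂ)
          = 2*(Real.pi:ℂ)*Complex.I*ω + (n:ℂ)*(2*(Real.pi:ℂ)*Complex.I) by push_cast; ring,
        Complex.exp_add, Complex.exp_int_mul_two_pi_mul_I, mul_one]
    rw [he, Complex.ofReal_zero, mul_zero, Complex.exp_zero]
    field_simp
    rw [Complex.I_sq]; ring
  calc ∫ x in (0:ℝ)..(2*Real.pi), intFac ω a x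
      = ∫ x in (0:ℝ)..(2*Real.pi), ∑' n : ℤ, Fn n x := by
        apply intervalIntegral.integral_congr
        intro x _
        exact ((hpt x).tsum_eq).symm
    _ = ∑' n : ℤ, ∫ x in (0:ℝ)..(2*Real.pi), Fn n x := hswap.symm
    _ = ∑' n : ℤ, ((1-E)*Complex.I) * (((besselJ n a : ℝ):ℂ) / ((ω:ℂ)+(n:ℂ))) :=
        tsum_congr hterm
    _ = (1-E) * (Complex.I * ∑' n : ℤ, ((besselJ n a : ℝ):ℂ) / ((ω:ℂ)+(n:ℂ))) := by
        rw [tsum_mul_left]; ring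

lemma continuous_intFac (ω a : ℝ) : Continuous (intFac ω a) := by
  unfold intFac; fun_prop

lemma intFac_per (ω a : ℝ) (x : ℝ) :
    intFac ω a (x + 2*Real.pi) = Complex.exp (2*Real.pi*Complex.I*ω) * intFac ω a x := by
  rw [intFac, intFac, ← Complex.exp_add, Real.sin_add_two_pi]
  congr 1
  push_cast
  ring

lemma integral_shift (ω a : ℝ) (Φ : ℝ) :
    ∫ x in (0:ℝ)..(Φ + 2*Real.pi), intFac ω a x
      = (∫ x in (0:ℝ)..(2*Real.pi), intFac ω a x)
        + Complex.exp (2*Real.pi*Complex.I*ω) * ∫ x in (0:ℝ)..Φ, intFac ω a x := by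
  have hint : ∀ u v : ℝ, IntervalIntegrable (intFac ω a) volume u v :=
    fun u v => (continuous_intFac ω a).intervalIntegrable u v
  have hsplit := intervalIntegral.integral_add_adjacent_intervals
    (a := 0) (b := 2*Real.pi) (c := Φ + 2*Real.pi) (hint _ _) (hint _ _)
  have hshift : ∫ x in (0:ℝ)..Φ, intFac ω a (x + 2*Real.pi)
      = ∫ x in (2*Real.pi)..(Φ + 2*Real.pi), intFac ω a x := by
    have h := intervalIntegral.integral_comp_add_right (a := 0) (b := Φ) (intFac ω a) (2*Real.pi)
    rwa [zero_add] at h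
  rw [← hsplit, ← hshift]
  simp_rw [intFac_per ω a]
  rw [intervalIntegral.integral_const_mul]

lemma psiBar_periodic (ω a : ℝ) (hω : ∀ n : ℤ, ω ≠ (n:ℝ)) (Φ : ℝ) :
    psiBar ω a (Φ + 2 * Real.pi) = psiBar ω a Φ := by
  set E := Complex.exp (2*Real.pi*Complex.I*ω) with hE
  set C := Complex.I * ∑' n : ℤ, ((besselJ n a : ℝ):ℂ) / ((ω:ℂ) + (n:ℂ)) with hC
  have hint : (C - ∫ x in (0:ℝ)..(Φ + 2*Real.pi), intFac ω a x)
      = E * (C - ∫ x in (0:ℝ)..Φ, intFac ω a x) := by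
    rw [integral_shift, key_integral ω a hω, ← hC, ← hE]
    ring
  have hexp : Complex.exp (-(Complex.I * ((ω : ℂ) * (((Φ + 2*Real.pi : ℝ)) : ℂ)
        + (a : ℂ) * ((Real.sin (Φ + 2*Real.pi) : ℝ) : ℂ))))
      = Complex.exp (-(2*Real.pi*Complex.I*ω)) *
        Complex.exp (-(Complex.I * ((ω : ℂ) * (Φ : ℂ) + (a : ℂ) * ((Real.sin Φ : ℝ) : ℂ)))) := by
    rw [← Complex.exp_add, Real.sin_add_two_pi]
    congr 1
    push_cast
    ring
  have hone : Complex.exp (-(2*Real.pi*Complex.I*ω)) * E = 1 := by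
    rw [hE, ← Complex.exp_add]
    simp
  unfold psiBar
  rw [hexp, hint]
  calc Complex.exp (-(2*Real.pi*Complex.I*ω)) *
        Complex.exp (-(Complex.I * ((ω : ℂ) * (Φ : ℂ) + (a : ℂ) * ((Real.sin Φ : ℝ) : ℂ)))) *
        (E * (C - ∫ x in (0:ℝ)..Φ, intFac ω a x))
      = (Complex.exp (-(2*Real.pi*Complex.I*ω)) * E) *
        (Complex.exp (-(Complex.I * ((ω : ℂ) * (Φ : ℂ) + (a : ℂ) * ((Real.sin Φ : ℝ) : ℂ)))) *
          (C - ∫ x in (0:ℝ)..Φ, intFac ω a x)) := by ring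
    _ = _ := by rw [hone, one_mul, hC]

lemma hasDerivAt_inner (ω a : ℝ) (Φ : ℝ) :
    HasDerivAt (fun x : ℝ => Complex.I * ((ω : ℂ) * (x : ℂ) + (a : ℂ) * (Real.sin x : ℂ)))
      (Complex.I * ((ω : ℂ) + (a : ℂ) * (Real.cos Φ : ℂ))) Φ := by
  have h1 : HasDerivAt (fun x : ℝ => (ω : ℂ) * (x : ℂ) + (a : ℂ) * (Real.sin x : ℂ))
      ((ω : ℂ) + (a : ℂ) * (Real.cos Φ : ℂ)) Φ := by
    have hx : HasDerivAt (fun x : ℝ => (ω : ℂ) * (x : ℂ)) (ω : ℂ) Φ := by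
      simpa using (Complex.ofRealCLM.hasDerivAt (x := Φ)).const_mul (ω : ℂ)
    have hs : HasDerivAt (fun x : ℝ => (a : ℂ) * (Real.sin x : ℂ))
        ((a : ℂ) * (Real.cos Φ : ℂ)) Φ := by
      exact ((Real.hasDerivAt_sin Φ).ofReal_comp).const_mul (a : ℂ)
    exact hx.add hs
  simpa [mul_comm] using h1.const_mul Complex.I

lemma hasDerivAt_psiBar (ω a : ℝ) (Φ : ℝ) :
    HasDerivAt (psiBar ω a)
      (-(Complex.I * ((ω : ℂ) + (a : ℂ) * (Real.cos Φ : ℂ))) * psiBar ω a Φ - 1) Φ := by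
  set C : ℂ := Complex.I * ∑' n : ℤ, (besselJ n a : ℂ) / ((ω : ℂ) + (n : ℂ)) with hC
  have hg := hasDerivAt_inner ω a Φ
  have hexp : HasDerivAt
      (fun x : ℝ => Complex.exp (-(Complex.I * ((ω : ℂ) * (x : ℂ) + (a : ℂ) * (Real.sin x : ℂ)))))
      (-(Complex.I * ((ω : ℂ) + (a : ℂ) * (Real.cos Φ : ℂ))) *
        Complex.exp (-(Complex.I * ((ω : ℂ) * (Φ : ℂ) + (a : ℂ) * (Real.sin Φ : ℂ))))) Φ := by
    simpa [mul_comm] using (hg.neg).cexp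
  have hint : HasDerivAt (fun x : ℝ => ∫ Φ' in (0:ℝ)..x, intFac ω a Φ') (intFac ω a Φ) Φ := by
    exact intervalIntegral.integral_hasDerivAt_right
      ((continuous_intFac ω a).intervalIntegrable _ _)
      ((continuous_intFac ω a).stronglyMeasurableAtFilter _ _)
      (continuous_intFac ω a).continuousAt
  have hmain := hexp.mul ((hasDerivAt_const Φ C).sub hint)
  have key : Complex.exp (-(Complex.I * ((ω : ℂ) * (Φ : ℂ) + (a : ℂ) * (Real.sin Φ : ℂ)))) *
      intFac ω a Φ = 1 := by
    rw [intFac, ← Complex.exp_add]; simp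
  refine hmain.congr_deriv ?_
  symm
  simp only [Pi.sub_apply, hC]
  unfold psiBar
  rw [zero_sub, mul_neg, ← key]
  ring


/-- For non-integer `ω̄`, `ψ̄` solves `dψ̄/dΦ + i(ω̄ + a cosΦ)ψ̄ = −1`
and is `2π`-periodic. -/
theorem stmt12 (ω a : ℝ) (hω : ∀ n : ℤ, ω ≠ (n : ℝ)) :
    (∀ Φ : ℝ, deriv (psiBar ω a) Φ +
        Complex.I * ((ω : ℂ) + (a : ℂ) * (Real.cos Φ : ℂ)) * psiBar ω a Φ = -1) ∧
    (∀ Φ : ℝ, psiBar ω a (Φ + 2 * Real.pi) = psiBar ω a Φ) := by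
  refine ⟨fun Φ => ?_, fun Φ => psiBar_periodic ω a hω Φ⟩
  rw [(hasDerivAt_psiBar ω a Φ).deriv]
  ring
end

section
/- For real α > 0 and real y, b with b > 0 (or more generally Re(b) > 0), ∫₀^∞ (x² + α²)^{−1/2}·exp(−b√(x² + α²))·cos(xy) dx = K₀(α√(b² + y²)), where K₀ is the modified Bessel function of the second kind of order 0. -/
/-- Modified Bessel function of the second kind of order zero,
via the integral representation `K₀(x) = ∫₀^∞ e^{−x cosh t} dt`. -/
noncomputable def besselK0 (x : ℝ) : ℝ :=
  ∫ t in Set.Ioi (0:ℝ), Real.exp (-x * Real.cosh t)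


open Real MeasureTheory Set Filter

lemma le_cosh (u : ℝ) (hu : 0 ≤ u) : u ≤ Real.cosh u :=
  (Real.self_le_sinh_iff.2 hu).trans (Real.sinh_lt_cosh u).le

lemma intA (c : ℝ) (hc : 0 < c) :
    IntegrableOn (fun u => Real.exp (-c * Real.cosh u)) (Set.Ioi (0:ℝ)) := by
  apply Integrable.mono (exp_neg_integrableOn_Ioi 0 hc)
    (Continuous.aestronglyMeasurable (by fun_prop))
  filter_upwards [ae_restrict_mem measurableSet_Ioi] with u hu
  rw [Real.norm_eq_abs, Real.norm_eq_abs, Real.abs_exp, Real.abs_exp]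
  exact Real.exp_le_exp.2 (by nlinarith [le_cosh u (le_of_lt hu)])

lemma intB (c : ℝ) (hc : 0 < c) :
    IntegrableOn (fun u => Real.cosh u * Real.exp (-c * Real.cosh u)) (Set.Ioi (0:ℝ)) := by
  have hint : IntegrableOn (fun u => (2/c) * Real.exp (-(c/2) * u)) (Set.Ioi (0:ℝ)) :=
    (exp_neg_integrableOn_Ioi 0 (by linarith)).const_mul _
  apply Integrable.mono hint (Continuous.aestronglyMeasurable (by fun_prop))
  filter_upwards [ae_restrict_mem measurableSet_Ioi] with u hu
  have h1 : (0:ℝ) < Real.cosh u := Real.cosh_pos u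
  have h2 : u ≤ Real.cosh u := le_cosh u hu.le
  have key : Real.cosh u ≤ (2/c) * Real.exp ((c/2) * Real.cosh u) := by
    have := Real.add_one_le_exp ((c/2) * Real.cosh u)
    rw [div_mul_eq_mul_div, le_div_iff₀ hc]
    nlinarith
  rw [Real.norm_eq_abs, Real.norm_eq_abs,
    abs_of_pos (mul_pos h1 (Real.exp_pos _)),
    abs_of_pos (mul_pos (by positivity) (Real.exp_pos _))]
  calc Real.cosh u * Real.exp (-c * Real.cosh u)
      ≤ ((2/c) * Real.exp ((c/2) * Real.cosh u)) * Real.exp (-c * Real.cosh u) :=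
        mul_le_mul_of_nonneg_right key (Real.exp_pos _).le
    _ = (2/c) * Real.exp (-(c/2) * Real.cosh u) := by
        rw [mul_assoc, ← Real.exp_add]; ring_nf
    _ ≤ (2/c) * Real.exp (-(c/2) * u) := by
        apply mul_le_mul_of_nonneg_left (Real.exp_le_exp.2 (by nlinarith)) (by positivity)

lemma Fderiv (r u θ : ℝ) :
    HasDerivAt (fun θ => Real.exp (-(r * Real.cos θ) * Real.cosh u) *
        Real.cos (r * Real.sin θ * Real.sinh u))
      (Real.exp (-(r * Real.cos θ) * Real.cosh u) *
        (r * Real.sin θ * Real.cosh u * Real.cos (r * Real.sin θ * Real.sinh u)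
          - r * Real.cos θ * Real.sinh u * Real.sin (r * Real.sin θ * Real.sinh u))) θ := by
  have h1 : HasDerivAt (fun θ : ℝ => -(r * Real.cos θ) * Real.cosh u)
      (r * Real.sin θ * Real.cosh u) θ := by
    have := (((Real.hasDerivAt_cos θ).const_mul r).neg).mul_const (Real.cosh u)
    exact this.congr_deriv (by ring)
  have h2 : HasDerivAt (fun θ : ℝ => r * Real.sin θ * Real.sinh u)
      (r * Real.cos θ * Real.sinh u) θ := by
    have := ((Real.hasDerivAt_sin θ).const_mul r).mul_const (Real.sinh u)
    convert this using 1 <;> ring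
  have := (h1.exp).mul (h2.cos)
  exact this.congr_deriv (by ring)

lemma Gderiv (p q u : ℝ) :
    HasDerivAt (fun u => Real.exp (-p * Real.cosh u) * Real.sin (q * Real.sinh u))
      (Real.exp (-p * Real.cosh u) *
        (q * Real.cosh u * Real.cos (q * Real.sinh u)
          - p * Real.sinh u * Real.sin (q * Real.sinh u))) u := by
  have h1 : HasDerivAt (fun u : ℝ => -p * Real.cosh u) (-p * Real.sinh u) u :=
    (Real.hasDerivAt_cosh u).const_mul (-p)
  have h2 : HasDerivAt (fun u : ℝ => q * Real.sinh u) (q * Real.cosh u) u :=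
    (Real.hasDerivAt_sinh u).const_mul q
  have := (h1.exp).mul (h2.sin)
  exact this.congr_deriv (by ring)

lemma key (p q : ℝ) (hp : 0 < p) :
    (∫ u in Set.Ioi (0:ℝ), Real.exp (-p * Real.cosh u) * Real.cos (q * Real.sinh u))
      = besselK0 (Real.sqrt (p ^ 2 + q ^ 2)) := by
  set r : ℝ := Real.sqrt (p ^ 2 + q ^ 2) with hrdef
  have hr : 0 < r := Real.sqrt_pos.2 (by positivity)
  have hr2 : r ^ 2 = p ^ 2 + q ^ 2 := Real.sq_sqrt (by positivity)
  set h : ℝ → ℝ := fun θ => ∫ u in Set.Ioi (0:ℝ),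
      Real.exp (-(r * Real.cos θ) * Real.cosh u) *
        Real.cos (r * Real.sin θ * Real.sinh u) with hdef
  -- derivative of h is zero on the open interval
  have hderiv : ∀ θ₀ ∈ Set.Ioo (-(π/2)) (π/2), HasDerivAt h 0 θ₀ := by
    intro θ₀ hθ₀
    have habs : |θ₀| < π/2 := abs_lt.2 ⟨hθ₀.1, hθ₀.2⟩
    set M : ℝ := (|θ₀| + π/2)/2 with hMdef
    set ε : ℝ := (π/2 - |θ₀|)/2 with hεdef
    have hε : 0 < ε := by simp only [hεdef]; linarith
    have hM : M < π/2 := by simp only [hMdef]; linarith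
    have hMpi : M ≤ π := by simp only [hMdef]; linarith [Real.pi_pos]
    set cM : ℝ := Real.cos M with hcMdef
    have hcM : 0 < cM := Real.cos_pos_of_mem_Ioo
      ⟨by simp only [hMdef]; linarith [abs_nonneg θ₀, Real.pi_pos], hM⟩
    have hcos : ∀ θ ∈ Metric.ball θ₀ ε, cM ≤ Real.cos θ := by
      intro θ hθ
      rw [Metric.mem_ball, Real.dist_eq] at hθ
      have h1 : |θ| ≤ M := by
        have := abs_sub_abs_le_abs_sub θ θ₀
        simp only [hMdef]; linarith
      calc cM ≤ Real.cos |θ| :=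
            Real.cos_le_cos_of_nonneg_of_le_pi (abs_nonneg θ) hMpi h1
        _ = Real.cos θ := Real.cos_abs θ
    have hp₀ : 0 < r * Real.cos θ₀ := mul_pos hr (Real.cos_pos_of_mem_Ioo hθ₀)
    have main := hasDerivAt_integral_of_dominated_loc_of_deriv_le
      (μ := volume.restrict (Set.Ioi (0:ℝ))) (x₀ := θ₀)
      (F := fun θ u => Real.exp (-(r * Real.cos θ) * Real.cosh u) *
        Real.cos (r * Real.sin θ * Real.sinh u))
      (F' := fun θ u => Real.exp (-(r * Real.cos θ) * Real.cosh u) *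
        (r * Real.sin θ * Real.cosh u * Real.cos (r * Real.sin θ * Real.sinh u)
          - r * Real.cos θ * Real.sinh u * Real.sin (r * Real.sin θ * Real.sinh u)))
      (bound := fun u => (2*r) * (Real.cosh u * Real.exp (-(r * cM) * Real.cosh u)))
      (Metric.ball_mem_nhds θ₀ hε)
      (Filter.Eventually.of_forall fun θ =>
        (Continuous.aestronglyMeasurable (by fun_prop)))
      ?_ (Continuous.aestronglyMeasurable (by fun_prop)) ?_ ?_
      (Filter.Eventually.of_forall fun u => fun θ _ => Fderiv r u θ)
    · -- conclude: derivative equals integral of F' θ₀, which is 0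
      have hzero : (∫ u in Set.Ioi (0:ℝ),
          Real.exp (-(r * Real.cos θ₀) * Real.cosh u) *
            (r * Real.sin θ₀ * Real.cosh u * Real.cos (r * Real.sin θ₀ * Real.sinh u)
              - r * Real.cos θ₀ * Real.sinh u *
                Real.sin (r * Real.sin θ₀ * Real.sinh u))) = 0 := by
        have hFTC := integral_Ioi_of_hasDerivAt_of_tendsto
          (f := fun u => Real.exp (-(r * Real.cos θ₀) * Real.cosh u) *
            Real.sin (r * Real.sin θ₀ * Real.sinh u))
          (f' := fun u => Real.exp (-(r * Real.cos θ₀) * Real.cosh u) *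
            (r * Real.sin θ₀ * Real.cosh u * Real.cos (r * Real.sin θ₀ * Real.sinh u)
              - r * Real.cos θ₀ * Real.sinh u *
                Real.sin (r * Real.sin θ₀ * Real.sinh u)))
          (a := 0) (m := 0)
          (Continuous.continuousWithinAt (by fun_prop))
          (fun u _ => Gderiv (r * Real.cos θ₀) (r * Real.sin θ₀) u)
          main.1
          ?_
        · rw [hFTC]; simp
        · -- tendsto 0 at top
          apply squeeze_zero_norm' (a := fun u => Real.exp (-(r * Real.cos θ₀) * u))
          · filter_upwards [Filter.eventually_ge_atTop (0:ℝ)] with u hu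
            rw [Real.norm_eq_abs, abs_mul, Real.abs_exp]
            calc Real.exp (-(r * Real.cos θ₀) * Real.cosh u) * |Real.sin _|
                ≤ Real.exp (-(r * Real.cos θ₀) * Real.cosh u) * 1 :=
                  mul_le_mul_of_nonneg_left (Real.abs_sin_le_one _) (Real.exp_pos _).le
              _ ≤ Real.exp (-(r * Real.cos θ₀) * u) := by
                  rw [mul_one]
                  exact Real.exp_le_exp.2 (by nlinarith [le_cosh u hu])
          · have h1 : Filter.Tendsto (fun u : ℝ => (r * Real.cos θ₀) * u)
                Filter.atTop Filter.atTop :=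
              Filter.Tendsto.const_mul_atTop hp₀ Filter.tendsto_id
            have h2 := Real.tendsto_exp_neg_atTop_nhds_zero.comp h1
            convert h2 using 2 with u
            simp [Function.comp, neg_mul]
      rw [hzero] at main
      exact main.2
    · -- hF_int : integrability of F θ₀
      apply Integrable.mono (intA (r * Real.cos θ₀) hp₀)
        (Continuous.aestronglyMeasurable (by fun_prop))
      refine Filter.Eventually.of_forall fun u => ?_
      simp only [Real.norm_eq_abs, abs_mul, Real.abs_exp]
      calc Real.exp (-(r * Real.cos θ₀) * Real.cosh u) * |Real.cos _|
          ≤ Real.exp (-(r * Real.cos θ₀) * Real.cosh u) * 1 :=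
            mul_le_mul_of_nonneg_left (Real.abs_cos_le_one _) (Real.exp_pos _).le
        _ = Real.exp (-(r * Real.cos θ₀) * Real.cosh u) := mul_one _
    · -- h_bound
      refine Filter.Eventually.of_forall fun u => fun θ hθ => ?_
      have hcoshpos := Real.cosh_pos u
      have hsinh : |Real.sinh u| ≤ Real.cosh u := by
        rw [Real.abs_sinh]
        calc Real.sinh |u| ≤ Real.cosh |u| := (Real.sinh_lt_cosh _).le
          _ = Real.cosh u := by rw [Real.cosh_abs]
      have hcθ : cM ≤ Real.cos θ := hcos θ hθ
      rw [Real.norm_eq_abs, abs_mul, Real.abs_exp]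
      have hb1 : |r * Real.sin θ * Real.cosh u * Real.cos (r * Real.sin θ * Real.sinh u)
          - r * Real.cos θ * Real.sinh u * Real.sin (r * Real.sin θ * Real.sinh u)|
          ≤ 2 * r * Real.cosh u := by
        have e1 : |r * Real.sin θ * Real.cosh u * Real.cos (r * Real.sin θ * Real.sinh u)|
            ≤ r * Real.cosh u := by
          rw [abs_mul, abs_mul, abs_mul, abs_of_pos hr, abs_of_pos hcoshpos]
          calc r * |Real.sin θ| * Real.cosh u * |Real.cos _|
              ≤ r * 1 * Real.cosh u * 1 := by
                gcongr
                · exact Real.abs_sin_le_one _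
                · exact Real.abs_cos_le_one _
            _ = r * Real.cosh u := by ring
        have e2 : |r * Real.cos θ * Real.sinh u * Real.sin (r * Real.sin θ * Real.sinh u)|
            ≤ r * Real.cosh u := by
          rw [abs_mul, abs_mul, abs_mul, abs_of_pos hr]
          calc r * |Real.cos θ| * |Real.sinh u| * |Real.sin _|
              ≤ r * 1 * Real.cosh u * 1 := by
                gcongr <;> first
                  | exact Real.abs_cos_le_one _
                  | exact Real.abs_sin_le_one _
                  | exact hsinh
            _ = r * Real.cosh u := by ring
        calc |_ - _| ≤ _ + _ := abs_sub _ _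
          _ ≤ r * Real.cosh u + r * Real.cosh u := add_le_add e1 e2
          _ = 2 * r * Real.cosh u := by ring
      calc Real.exp (-(r * Real.cos θ) * Real.cosh u) * |_|
          ≤ Real.exp (-(r * Real.cos θ) * Real.cosh u) * (2 * r * Real.cosh u) :=
            mul_le_mul_of_nonneg_left hb1 (Real.exp_pos _).le
        _ ≤ Real.exp (-(r * cM) * Real.cosh u) * (2 * r * Real.cosh u) := by
            have : -(r * Real.cos θ) * Real.cosh u ≤ -(r * cM) * Real.cosh u := by
              nlinarith [mul_le_mul_of_nonneg_right
                (mul_le_mul_of_nonneg_left hcθ hr.le) hcoshpos.le]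
            exact mul_le_mul_of_nonneg_right (Real.exp_le_exp.2 this) (by positivity)
        _ = (2*r) * (Real.cosh u * Real.exp (-(r * cM) * Real.cosh u)) := by ring
    · -- bound integrable
      exact (intB (r * cM) (mul_pos hr hcM)).const_mul (2*r)
  -- endpoints
  set θ₁ : ℝ := Real.arcsin (q / r) with hθ₁def
  have hqr : |q| < r := by
    have hq2 : q ^ 2 < r ^ 2 := by rw [hr2]; nlinarith
    nlinarith [abs_nonneg q, sq_abs q]
  have hq1 : q / r < 1 := (div_lt_one hr).2 (lt_of_abs_lt hqr)
  have hq2 : -1 < q / r := by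
    rw [neg_lt, ← neg_div]
    exact (div_lt_one hr).2 (by have := abs_lt.1 hqr; linarith)
  have hmem : θ₁ ∈ Set.Ioo (-(π/2)) (π/2) :=
    ⟨Real.neg_pi_div_two_lt_arcsin.2 hq2, Real.arcsin_lt_pi_div_two.2 hq1⟩
  have hsin : Real.sin θ₁ = q / r := Real.sin_arcsin hq2.le hq1.le
  have hcosθ : Real.cos θ₁ = p / r := by
    rw [hθ₁def, Real.cos_arcsin]
    have e : 1 - (q/r)^2 = (p/r)^2 := by
      field_simp
      linarith [hr2]
    rw [e, Real.sqrt_sq (by positivity)]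
  have hrc : r * Real.cos θ₁ = p := by rw [hcosθ]; field_simp
  have hrs : r * Real.sin θ₁ = q := by rw [hsin]; field_simp
  have hconst : h θ₁ = h 0 := by
    rcases le_total 0 θ₁ with h01 | h01
    · have hsub : Set.Icc (0:ℝ) θ₁ ⊆ Set.Ioo (-(π/2)) (π/2) :=
        Set.Icc_subset_Ioo (by linarith [Real.pi_pos]) hmem.2
      exact constant_of_has_deriv_right_zero
        (fun x hx => ((hderiv x (hsub hx)).continuousAt.continuousWithinAt))
        (fun x hx => (hderiv x (hsub (Set.Ico_subset_Icc_self hx))).hasDerivWithinAt)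
        θ₁ (Set.right_mem_Icc.2 h01)
    · have hsub : Set.Icc θ₁ (0:ℝ) ⊆ Set.Ioo (-(π/2)) (π/2) :=
        Set.Icc_subset_Ioo hmem.1 (by linarith [Real.pi_pos])
      exact (constant_of_has_deriv_right_zero
        (fun x hx => ((hderiv x (hsub hx)).continuousAt.continuousWithinAt))
        (fun x hx => (hderiv x (hsub (Set.Ico_subset_Icc_self hx))).hasDerivWithinAt)
        0 (Set.right_mem_Icc.2 h01)).symm
  have h1 : h θ₁ = ∫ u in Set.Ioi (0:ℝ),
      Real.exp (-p * Real.cosh u) * Real.cos (q * Real.sinh u) := by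
    simp only [hdef]; rw [hrc, hrs]
  have h2 : h 0 = besselK0 r := by
    simp only [hdef, besselK0, Real.cos_zero, Real.sin_zero, mul_one, mul_zero,
      zero_mul, Real.cos_zero]
  rw [← h1, hconst, h2]

/-- Fourier cosine transform identity:
`∫₀^∞ (x²+α²)^{−1/2} e^{−b√(x²+α²)} cos(xy) dx = K₀(α√(b²+y²))`
for `α > 0`, `b > 0`, `y ∈ ℝ`. -/
theorem stmt13 (α b y : ℝ) (hα : 0 < α) (hb : 0 < b) :
    (∫ x in Set.Ioi (0:ℝ),
        (x ^ 2 + α ^ 2) ^ (-(1:ℝ)/2) * Real.exp (-b * Real.sqrt (x ^ 2 + α ^ 2)) *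
          Real.cos (x * y))
      = besselK0 (α * Real.sqrt (b ^ 2 + y ^ 2)) := by
  have himg : (fun u => α * Real.sinh u) '' Set.Ioi (0:ℝ) = Set.Ioi 0 := by
    ext z
    constructor
    · rintro ⟨u, hu, rfl⟩
      exact mul_pos hα (Real.sinh_pos_iff.2 hu)
    · intro hz
      refine ⟨Real.arsinh (z/α), Real.arsinh_pos_iff.2 (div_pos hz hα), ?_⟩
      show α * Real.sinh (Real.arsinh (z/α)) = z
      rw [Real.sinh_arsinh]; field_simp
  have hinj : Set.InjOn (fun u => α * Real.sinh u) (Set.Ioi (0:ℝ)) :=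
    Function.Injective.injOn (fun u v h => Real.sinh_injective
      (mul_left_cancel₀ hα.ne' (h : α * Real.sinh u = α * Real.sinh v)))
  have hchg := MeasureTheory.integral_image_eq_integral_abs_deriv_smul
    (f := fun u => α * Real.sinh u) (f' := fun u => α * Real.cosh u)
    measurableSet_Ioi
    (fun u _ => ((Real.hasDerivAt_sinh u).const_mul α).hasDerivWithinAt)
    hinj
    (fun x => (x ^ 2 + α ^ 2) ^ (-(1:ℝ)/2) * Real.exp (-b * Real.sqrt (x ^ 2 + α ^ 2)) *
      Real.cos (x * y))
  rw [himg] at hchg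
  rw [hchg]
  have heq : ∀ u : ℝ,
      |α * Real.cosh u| • (((α * Real.sinh u) ^ 2 + α ^ 2) ^ (-(1:ℝ)/2) *
        Real.exp (-b * Real.sqrt ((α * Real.sinh u) ^ 2 + α ^ 2)) *
        Real.cos ((α * Real.sinh u) * y))
      = Real.exp (-(α*b) * Real.cosh u) * Real.cos ((α*y) * Real.sinh u) := by
    intro u
    have ht : 0 < α * Real.cosh u := mul_pos hα (Real.cosh_pos u)
    have hsq : (α * Real.sinh u) ^ 2 + α ^ 2 = (α * Real.cosh u) ^ 2 := by
      have := Real.cosh_sq u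
      nlinarith [Real.cosh_sq u]
    have hsqrt : Real.sqrt ((α * Real.sinh u) ^ 2 + α ^ 2) = α * Real.cosh u := by
      rw [hsq, Real.sqrt_sq ht.le]
    have hrpow : (((α * Real.sinh u) ^ 2 + α ^ 2) : ℝ) ^ (-(1:ℝ)/2)
        = (α * Real.cosh u)⁻¹ := by
      rw [hsq, show (-(1:ℝ)/2) = -(1/2) by ring, Real.rpow_neg (sq_nonneg _),
        ← Real.sqrt_eq_rpow, Real.sqrt_sq ht.le]
    rw [smul_eq_mul, abs_of_pos ht, hrpow, hsqrt]
    have hc : Real.cos (α * Real.sinh u * y) = Real.cos ((α*y) * Real.sinh u) := by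
      ring_nf
    have he : Real.exp (-b * (α * Real.cosh u)) = Real.exp (-(α*b) * Real.cosh u) := by
      ring_nf
    rw [hc, he]
    field_simp
  rw [MeasureTheory.integral_congr_ae (Filter.Eventually.of_forall heq)]
  rw [key (α*b) (α*y) (mul_pos hα hb)]
  congr 1
  rw [show (α*b)^2 + (α*y)^2 = α^2 * (b^2+y^2) by ring, Real.sqrt_mul (sq_nonneg α),
    Real.sqrt_sq hα.le]
end

section
/- Let α > 0, x, y ∈ ℝ with r = √(x² + y²) > 0, γ² = (x + r)/(2r), and βt = α/r. Then for every k > 0, the identity (kx + βt/k)² + k²y² = 4α(z² + γ²) holds, where z = |kr − α/(kr)|/√(4α). -/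
/-- With `r = √(x²+y²) > 0`, `γ² = (x+r)/(2r)`, `βt = α/r` and
`z = |kr − α/(kr)|/√(4α)`, for every `k > 0` one has
`(kx + βt/k)² + k²y² = 4α(z² + γ²)`. -/
theorem stmt17 (α x y : ℝ) (hα : 0 < α)
    (hr : 0 < Real.sqrt (x ^ 2 + y ^ 2)) (k : ℝ) (hk : 0 < k) :
    let r := Real.sqrt (x ^ 2 + y ^ 2)
    let z := |k * r - α / (k * r)| / Real.sqrt (4 * α)
    (k * x + (α / r) / k) ^ 2 + k ^ 2 * y ^ 2
      = 4 * α * (z ^ 2 + (x + r) / (2 * r)) := by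
  intro r z
  have hr' : 0 < r := hr
  have hr2 : r ^ 2 = x ^ 2 + y ^ 2 := Real.sq_sqrt (by positivity)
  have h4α : 0 < Real.sqrt (4 * α) := Real.sqrt_pos.mpr (by linarith)
  have hs : Real.sqrt (4 * α) ^ 2 = 4 * α := Real.sq_sqrt (by linarith)
  have hz : z ^ 2 = (k * r - α / (k * r)) ^ 2 / (4 * α) := by
    simp only [z, div_pow, sq_abs, hs]
  rw [hz]
  field_simp
  linear_combination (-2*k^4*r^2) * hr2
end
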